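/- arXiv:2401.00554 — 4 statements merged into one kernel-verified Lean document; each statement's English description precedes it below -/
import Mathlib

section
/- Let d ≥ 1 be an integer, p ∈ [1,∞), s ∈ (0,1), and let Ω ⊆ ℝ^d be an open set symmetric with respect to the hyperplane {x_d = 0}, i.e. (x', x_d) ∈ Ω if and only if (x', −x_d) ∈ Ω. Set Ω⁺ := Ω ∩ {x_d > 0}. For a measurable u : ℝ^d → ℝ with ‖u‖_{W^s_p(Ω⁺)} < ∞, define the even reflection u_even on Ω by u_even(x', x_d) = u(x', x_d) for x_d ≥ 0 and u_even(x', x_d) = u(x', −x_d) for x_d < 0. Then ‖u_even‖_{W^s_p(Ω)} ≤ 4 ‖u‖_{W^s_p(Ω⁺)}. -/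
open MeasureTheory
open scoped ENNReal

/-- Euclidean norm on `Fin d → ℝ`. -/
noncomputable def euclNorm (d : ℕ) (x : Fin d → ℝ) : ℝ := Real.sqrt (∑ i, (x i) ^ 2)

/-- `p`-th power of the Gagliardo seminorm
`[u]_{W^s_p(D)}^p = ∫_D ∫_D |u x - u y|^p / |x - y|^{d + s p}`. -/
noncomputable def gagliardoP (d : ℕ) (D : Set (Fin d → ℝ)) (p s : ℝ)
    (u : (Fin d → ℝ) → ℝ) : ℝ≥0∞ :=
  ∫⁻ x in D, ∫⁻ y in D,
    ENNReal.ofReal (|u x - u y| ^ p / euclNorm d (x - y) ^ ((d : ℝ) + s * p))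

/-- Fractional Sobolev norm `‖u‖_{W^s_p(D)} = ‖u‖_{L^p(D)} + [u]_{W^s_p(D)}`. -/
noncomputable def fracSobolevNorm (d : ℕ) (D : Set (Fin d → ℝ)) (p s : ℝ)
    (u : (Fin d → ℝ) → ℝ) : ℝ≥0∞ :=
  (∫⁻ x in D, ENNReal.ofReal (|u x| ^ p)) ^ (1 / p) + gagliardoP d D p s u ^ (1 / p)

namespace EvenReflAux

variable {n : ℕ}

def R (n : ℕ) (x : Fin (n + 1) → ℝ) : Fin (n + 1) → ℝ :=
  Function.update x (Fin.last n) (-(x (Fin.last n)))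

lemma R_apply (x : Fin (n + 1) → ℝ) (i : Fin (n + 1)) :
    R n x i = if i = Fin.last n then -(x (Fin.last n)) else x i :=
  Function.update_apply x _ _ i

lemma R_last (x : Fin (n + 1) → ℝ) : R n x (Fin.last n) = -(x (Fin.last n)) := by
  simp [R_apply]

lemma R_invol (x : Fin (n + 1) → ℝ) : R n (R n x) = x := by
  funext i
  rcases eq_or_ne i (Fin.last n) with h | h <;> simp [R_apply, h]

lemma measurable_R : Measurable (R n) := by
  apply measurable_pi_lambda
  intro i
  rcases eq_or_ne i (Fin.last n) with h | h
  · have hm : Measurable fun x : Fin (n + 1) → ℝ => -(x (Fin.last n)) :=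
      (measurable_pi_apply (Fin.last n)).neg
    simpa [R_apply, h] using hm
  · simpa [R_apply, h] using measurable_pi_apply i

noncomputable def Req (n : ℕ) : (Fin (n + 1) → ℝ) ≃ᵐ (Fin (n + 1) → ℝ) where
  toFun := R n
  invFun := R n
  left_inv := R_invol
  right_inv := R_invol
  measurable_toFun := measurable_R
  measurable_invFun := measurable_R

lemma mp_R : MeasurePreserving (R n) volume volume := by
  classical
  have hf : ∀ i : Fin (n + 1), MeasurePreserving
      (if i = Fin.last n then (fun a : ℝ => -a) else id) volume volume := by
    intro i
    split
    · exact Measure.measurePreserving_neg _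
    · exact MeasurePreserving.id _
  have h := volume_preserving_pi hf
  have : (fun (a : Fin (n + 1) → ℝ) (i : Fin (n + 1)) =>
      (if i = Fin.last n then (fun a : ℝ => -a) else id) (a i)) = R n := by
    funext a i
    rcases eq_or_ne i (Fin.last n) with hi | hi <;> simp [R_apply, hi]
  rwa [this] at h

lemma cov (f : (Fin (n + 1) → ℝ) → ℝ≥0∞) (s : Set (Fin (n + 1) → ℝ)) :
    ∫⁻ x in R n ⁻¹' s, f (R n x) = ∫⁻ x in s, f x :=
  mp_R.setLIntegral_comp_preimage_emb (Req n).measurableEmbedding f s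

lemma eucl_R_sub (x y : Fin (n + 1) → ℝ) :
    euclNorm (n + 1) (R n x - R n y) = euclNorm (n + 1) (x - y) := by
  unfold euclNorm
  congr 1
  refine Finset.sum_congr rfl fun i _ => ?_
  rcases eq_or_ne i (Fin.last n) with h | h <;>
    simp [R_apply, h, Pi.sub_apply] <;> ring

lemma eucl_sub_comm (x y : Fin (n + 1) → ℝ) :
    euclNorm (n + 1) (x - y) = euclNorm (n + 1) (y - x) := by
  unfold euclNorm
  congr 1
  refine Finset.sum_congr rfl fun i _ => ?_
  simp [Pi.sub_apply]
  ring

lemma eucl_sub_R_le (x y : Fin (n + 1) → ℝ) (hx : 0 ≤ x (Fin.last n))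
    (hy : y (Fin.last n) ≤ 0) :
    euclNorm (n + 1) (x - R n y) ≤ euclNorm (n + 1) (x - y) := by
  unfold euclNorm
  apply Real.sqrt_le_sqrt
  refine Finset.sum_le_sum fun i _ => ?_
  rcases eq_or_ne i (Fin.last n) with h | h
  · subst h
    simp only [Pi.sub_apply, R_last]
    nlinarith
  · simp [R_apply, h, Pi.sub_apply]

lemma eucl_nonneg (d : ℕ) (x : Fin d → ℝ) : 0 ≤ euclNorm d x := Real.sqrt_nonneg _

lemma eucl_eq_zero {d : ℕ} {x : Fin d → ℝ} (h : euclNorm d x = 0) : x = 0 := by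
  unfold euclNorm at h
  have hsum : ∑ i, (x i) ^ 2 = 0 := by
    have h0 : (0:ℝ) ≤ ∑ i, (x i) ^ 2 := Finset.sum_nonneg fun i _ => sq_nonneg _
    nlinarith [Real.sq_sqrt h0, Real.sqrt_nonneg (∑ i, (x i) ^ 2)]
  funext i
  have := (Finset.sum_eq_zero_iff_of_nonneg (fun i _ => sq_nonneg (x i))).1 hsum i
    (Finset.mem_univ i)
  have : x i = 0 := by nlinarith
  simpa using this

lemma key {a b c e p : ℝ} (ha : b = 0 → a = 0) (hb : 0 ≤ b) (hbc : b ≤ c)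
    (he : 0 < e) (hp : 0 < p) :
    ENNReal.ofReal (|a| ^ p / c ^ e) ≤ ENNReal.ofReal (|a| ^ p / b ^ e) := by
  rcases eq_or_lt_of_le hb with h0 | h0
  · rw [ha h0.symm]
    simp [Real.zero_rpow hp.ne']
  · apply ENNReal.ofReal_le_ofReal
    have h1 : (0:ℝ) < b ^ e := Real.rpow_pos_of_pos h0 e
    have h2 : b ^ e ≤ c ^ e := Real.rpow_le_rpow h0.le hbc he.le
    exact div_le_div_of_nonneg_left (by positivity) h1 h2

lemma null_hyperplane (n : ℕ) :
    volume {x : Fin (n + 1) → ℝ | x (Fin.last n) = 0} = 0 := by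
  classical
  have hset : {x : Fin (n + 1) → ℝ | x (Fin.last n) = 0} =
      Set.pi Set.univ (fun i => if i = Fin.last n then ({0} : Set ℝ) else Set.univ) := by
    ext x
    simp only [Set.mem_setOf_eq, Set.mem_pi, Set.mem_univ, forall_true_left]
    constructor
    · intro h i
      rcases eq_or_ne i (Fin.last n) with hi | hi <;> simp [hi, h]
    · intro h
      have := h (Fin.last n)
      simpa using this
  rw [hset, volume_pi_pi]
  exact Finset.prod_eq_zero (Finset.mem_univ (Fin.last n)) (by simp)

end EvenReflAux

/-- The even reflection across `{x_d = 0}` of a function on a symmetric open set `Ω`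
satisfies `‖u_even‖_{W^s_p(Ω)} ≤ 4 ‖u‖_{W^s_p(Ω⁺)}`, where `Ω⁺ = Ω ∩ {x_d > 0}`. -/
theorem even_reflection_fracSobolev_bound (n : ℕ) (p s : ℝ)
    (hp : 1 ≤ p) (hs0 : 0 < s) (hs1 : s < 1)
    (Ω : Set (Fin (n + 1) → ℝ)) (hΩ : IsOpen Ω)
    (hsym : ∀ x : Fin (n + 1) → ℝ,
      x ∈ Ω ↔ Function.update x (Fin.last n) (-(x (Fin.last n))) ∈ Ω)
    (u : (Fin (n + 1) → ℝ) → ℝ) (hu : Measurable u)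
    (hfin : fracSobolevNorm (n + 1) (Ω ∩ {x | 0 < x (Fin.last n)}) p s u ≠ ⊤) :
    fracSobolevNorm (n + 1) Ω p s
      (fun x => if 0 ≤ x (Fin.last n) then u x
        else u (Function.update x (Fin.last n) (-(x (Fin.last n)))))
      ≤ 4 * fracSobolevNorm (n + 1) (Ω ∩ {x | 0 < x (Fin.last n)}) p s u := by
  classical
  have hp0 : (0:ℝ) < p := lt_of_lt_of_le one_pos hp
  set L := Fin.last n with hLdef
  set Rm := EvenReflAux.R n with hRdef
  have hRL : ∀ x : Fin (n + 1) → ℝ, Rm x L = -(x L) := fun x => EvenReflAux.R_last x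
  set P := Ω ∩ {x : Fin (n + 1) → ℝ | 0 < x L} with hPdef
  set N := Ω ∩ {x : Fin (n + 1) → ℝ | x L < 0} with hNdef
  have hmL : Measurable fun x : Fin (n + 1) → ℝ => x L := measurable_pi_apply L
  have hPm : MeasurableSet P := hΩ.measurableSet.inter (measurableSet_lt measurable_const hmL)
  have hNm : MeasurableSet N := hΩ.measurableSet.inter (measurableSet_lt hmL measurable_const)
  have hRP : Rm ⁻¹' P = N := by
    ext x
    simp only [Set.mem_preimage, hPdef, hNdef, Set.mem_inter_iff, Set.mem_setOf_eq]
    constructor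
    · rintro ⟨h1, h2⟩
      rw [hRL] at h2
      exact ⟨(hsym x).2 h1, by linarith⟩
    · rintro ⟨h1, h2⟩
      exact ⟨(hsym x).1 h1, by rw [hRL]; linarith⟩
  have hcov : ∀ f : (Fin (n + 1) → ℝ) → ℝ≥0∞,
      ∫⁻ x in N, f (Rm x) = ∫⁻ x in P, f x := by
    intro f
    rw [← hRP]
    exact EvenReflAux.cov f P
  have hsplit : ∀ f : (Fin (n + 1) → ℝ) → ℝ≥0∞,
      ∫⁻ x in Ω, f x = (∫⁻ x in P, f x) + ∫⁻ x in N, f x := by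
    intro f
    have hdisj : Disjoint P N := by
      rw [Set.disjoint_left]
      rintro x ⟨_, h1⟩ ⟨_, h2⟩
      simp only [Set.mem_setOf_eq] at h1 h2
      linarith
    have hae : (Ω : Set (Fin (n + 1) → ℝ)) =ᵐ[(volume : Measure (Fin (n + 1) → ℝ))]
        ((P ∪ N : Set (Fin (n + 1) → ℝ)) : Set (Fin (n + 1) → ℝ)) := by
      rw [ae_eq_set]
      constructor
      · refine measure_mono_null ?_ (EvenReflAux.null_hyperplane n)
        rintro x ⟨hxΩ, hxn⟩
        have h1 : ¬ (0 < x L) := fun h => hxn (Or.inl ⟨hxΩ, h⟩)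
        have h2 : ¬ (x L < 0) := fun h => hxn (Or.inr ⟨hxΩ, h⟩)
        show x L = 0
        linarith
      · have hsub : (P ∪ N) \ Ω = ∅ := by
          rw [Set.diff_eq_empty]
          exact Set.union_subset Set.inter_subset_left Set.inter_subset_left
        rw [hsub]
        exact measure_empty
    rw [setLIntegral_congr hae, Measure.restrict_union hdisj hNm, lintegral_add_measure]
  set v := fun x : Fin (n + 1) → ℝ => if 0 ≤ x L then u x
    else u (Function.update x L (-(x L))) with hvdef
  have hvpos : ∀ x : Fin (n + 1) → ℝ, 0 ≤ x L → v x = u x := by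
    intro x hx
    simp only [hvdef]
    exact if_pos hx
  have hvneg : ∀ x : Fin (n + 1) → ℝ, ¬ 0 ≤ x L → v x = u (Rm x) := by
    intro x hx
    simp only [hvdef]
    exact if_neg hx
  set A := ∫⁻ x in P, ENNReal.ofReal (|u x| ^ p) with hAdef
  have hLp : (∫⁻ x in Ω, ENNReal.ofReal (|v x| ^ p)) = A + A := by
    rw [hsplit]
    have e1 : (∫⁻ x in P, ENNReal.ofReal (|v x| ^ p)) = A := by
      rw [hAdef]
      refine setLIntegral_congr_fun hPm (fun x hx => ?_)
      rw [hvpos x (le_of_lt hx.2)]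
    have e2 : (∫⁻ x in N, ENNReal.ofReal (|v x| ^ p)) = A := by
      rw [hAdef, ← hcov fun x => ENNReal.ofReal (|u x| ^ p)]
      refine setLIntegral_congr_fun hNm (fun x hx => ?_)
      rw [hvneg x (not_le.2 hx.2)]
    rw [e1, e2]
  have hE0 : (0:ℝ) < ((n + 1 : ℕ) : ℝ) + s * p := by
    have h1 : (0:ℝ) ≤ ((n + 1 : ℕ) : ℝ) := Nat.cast_nonneg _
    have h2 : (0:ℝ) < s * p := mul_pos hs0 hp0
    linarith
  set E : ℝ := ((n + 1 : ℕ) : ℝ) + s * p with hEdef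
  set F := fun (w : (Fin (n + 1) → ℝ) → ℝ) (x y : Fin (n + 1) → ℝ) =>
    ENNReal.ofReal (|w x - w y| ^ p / euclNorm (n + 1) (x - y) ^ E) with hFdef
  have hgag : ∀ (D : Set (Fin (n + 1) → ℝ)) (w : (Fin (n + 1) → ℝ) → ℝ),
      gagliardoP (n + 1) D p s w = ∫⁻ x in D, ∫⁻ y in D, F w x y := fun D w => rfl
  have hcross1 : ∀ x y : Fin (n + 1) → ℝ, 0 ≤ x L → y L ≤ 0 →
      ENNReal.ofReal (|u x - u (Rm y)| ^ p / euclNorm (n + 1) (x - y) ^ E) ≤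
        F u x (Rm y) := by
    intro x y hx hy
    simp only [hFdef]
    refine EvenReflAux.key ?_ (EvenReflAux.eucl_nonneg _ _)
      (EvenReflAux.eucl_sub_R_le x y hx hy) hE0 hp0
    intro h0
    have hz := EvenReflAux.eucl_eq_zero h0
    have hxy : x = Rm y := by rwa [sub_eq_zero] at hz
    rw [hxy, sub_self]
  have hcross2 : ∀ x y : Fin (n + 1) → ℝ, x L ≤ 0 → 0 ≤ y L →
      ENNReal.ofReal (|u (Rm x) - u y| ^ p / euclNorm (n + 1) (x - y) ^ E) ≤
        F u (Rm x) y := by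
    intro x y hx hy
    simp only [hFdef]
    have hle : euclNorm (n + 1) (Rm x - y) ≤ euclNorm (n + 1) (x - y) := by
      rw [EvenReflAux.eucl_sub_comm (Rm x) y, EvenReflAux.eucl_sub_comm x y]
      exact EvenReflAux.eucl_sub_R_le y x hy hx
    refine EvenReflAux.key ?_ (EvenReflAux.eucl_nonneg _ _) hle hE0 hp0
    intro h0
    have hz := EvenReflAux.eucl_eq_zero h0
    have hxy : Rm x = y := by rwa [sub_eq_zero] at hz
    rw [hxy, sub_self]
  set g := fun x : Fin (n + 1) → ℝ => ∫⁻ y in P, F u x y with hgdef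
  set G := gagliardoP (n + 1) P p s u with hGdef
  have hGg : G = ∫⁻ x in P, g x := hgag P u
  have hGv : gagliardoP (n + 1) Ω p s v ≤ 4 * G := by
    rw [hgag Ω v, hsplit]
    have hPpart : ∫⁻ x in P, (∫⁻ y in Ω, F v x y) ≤ 2 * G := by
      have hb : ∀ x ∈ P, (∫⁻ y in Ω, F v x y) ≤ 2 * g x := by
        intro x hx
        have hx0 : (0:ℝ) ≤ x L := le_of_lt hx.2
        rw [hsplit]
        have h1 : ∫⁻ y in P, F v x y = g x := by
          simp only [hgdef]
          refine setLIntegral_congr_fun hPm (fun y hy => ?_)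
          simp only [hFdef]
          rw [hvpos x hx0, hvpos y (le_of_lt hy.2)]
        have h2 : ∫⁻ y in N, F v x y ≤ g x := by
          have hmono : ∫⁻ y in N, F v x y ≤ ∫⁻ y in N, F u x (Rm y) := by
            refine setLIntegral_mono' hNm fun y hy => ?_
            have hy0 : y L < 0 := hy.2
            have hFeq : F v x y = ENNReal.ofReal (|u x - u (Rm y)| ^ p /
                euclNorm (n + 1) (x - y) ^ E) := by
              simp only [hFdef]
              rw [hvpos x hx0, hvneg y (not_le.2 hy0)]
            rw [hFeq]
            exact hcross1 x y hx0 (le_of_lt hy0)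
          exact hmono.trans_eq (hcov fun z => F u x z)
        rw [h1]
        calc g x + ∫⁻ y in N, F v x y ≤ g x + g x := add_le_add_right h2 _
          _ = 2 * g x := (two_mul _).symm
      calc ∫⁻ x in P, (∫⁻ y in Ω, F v x y) ≤ ∫⁻ x in P, 2 * g x :=
            setLIntegral_mono' hPm hb
        _ = 2 * ∫⁻ x in P, g x := lintegral_const_mul' 2 g (by norm_num)
        _ = 2 * G := by rw [hGg]
    have hNpart : ∫⁻ x in N, (∫⁻ y in Ω, F v x y) ≤ 2 * G := by
      have hb : ∀ x ∈ N, (∫⁻ y in Ω, F v x y) ≤ 2 * g (Rm x) := by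
        intro x hx
        have hx0 : x L < 0 := hx.2
        rw [hsplit]
        have h1 : ∫⁻ y in P, F v x y ≤ g (Rm x) := by
          simp only [hgdef]
          refine setLIntegral_mono' hPm fun y hy => ?_
          have hFeq : F v x y = ENNReal.ofReal (|u (Rm x) - u y| ^ p /
              euclNorm (n + 1) (x - y) ^ E) := by
            simp only [hFdef]
            rw [hvneg x (not_le.2 hx0), hvpos y (le_of_lt hy.2)]
          rw [hFeq]
          exact hcross2 x y (le_of_lt hx0) (le_of_lt hy.2)
        have h2 : ∫⁻ y in N, F v x y = g (Rm x) := by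
          have heq : ∫⁻ y in N, F v x y = ∫⁻ y in N, F u (Rm x) (Rm y) := by
            refine setLIntegral_congr_fun hNm (fun y hy => ?_)
            simp only [hFdef]
            rw [hvneg x (not_le.2 hx0), hvneg y (not_le.2 hy.2),
              ← EvenReflAux.eucl_R_sub x y]
          rw [heq]
          exact hcov fun z => F u (Rm x) z
        rw [h2]
        calc (∫⁻ y in P, F v x y) + g (Rm x) ≤ g (Rm x) + g (Rm x) :=
              add_le_add_left h1 _
          _ = 2 * g (Rm x) := (two_mul _).symm
      calc ∫⁻ x in N, (∫⁻ y in Ω, F v x y) ≤ ∫⁻ x in N, 2 * g (Rm x) :=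
            setLIntegral_mono' hNm hb
        _ = 2 * ∫⁻ x in N, g (Rm x) := lintegral_const_mul' 2 _ (by norm_num)
        _ = 2 * G := by rw [hcov g, hGg]
    calc (∫⁻ x in P, (∫⁻ y in Ω, F v x y)) + ∫⁻ x in N, (∫⁻ y in Ω, F v x y)
        ≤ 2 * G + 2 * G := add_le_add hPpart hNpart
      _ = 4 * G := by ring
  have h1p0 : (0:ℝ) ≤ 1 / p := by positivity
  have h1p1 : (1:ℝ) / p ≤ 1 := by
    rw [div_le_one hp0]
    exact hp
  have h2le : (2:ℝ≥0∞) ^ ((1:ℝ) / p) ≤ 4 := by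
    calc (2:ℝ≥0∞) ^ ((1:ℝ) / p) ≤ 2 ^ (1:ℝ) :=
          ENNReal.rpow_le_rpow_of_exponent_le (by norm_num) h1p1
      _ = 2 := ENNReal.rpow_one 2
      _ ≤ 4 := by norm_num
  have h4le : (4:ℝ≥0∞) ^ ((1:ℝ) / p) ≤ 4 := by
    calc (4:ℝ≥0∞) ^ ((1:ℝ) / p) ≤ 4 ^ (1:ℝ) :=
          ENNReal.rpow_le_rpow_of_exponent_le (by norm_num) h1p1
      _ = 4 := ENNReal.rpow_one 4
  have hA4 : (A + A) ^ ((1:ℝ) / p) ≤ 4 * A ^ ((1:ℝ) / p) := by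
    rw [← two_mul, ENNReal.mul_rpow_of_nonneg _ _ h1p0]
    exact mul_le_mul_left h2le _
  have hG4 : gagliardoP (n + 1) Ω p s v ^ ((1:ℝ) / p) ≤ 4 * G ^ ((1:ℝ) / p) := by
    calc gagliardoP (n + 1) Ω p s v ^ ((1:ℝ) / p) ≤ (4 * G) ^ ((1:ℝ) / p) :=
          ENNReal.rpow_le_rpow hGv h1p0
      _ = 4 ^ ((1:ℝ) / p) * G ^ ((1:ℝ) / p) := ENNReal.mul_rpow_of_nonneg _ _ h1p0
      _ ≤ 4 * G ^ ((1:ℝ) / p) := mul_le_mul_left h4le _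
  show fracSobolevNorm (n + 1) Ω p s v ≤ 4 * fracSobolevNorm (n + 1) P p s u
  simp only [fracSobolevNorm]
  rw [hLp, ← hGdef, mul_add]
  exact add_le_add hA4 hG4
end

section
/- For each integer j ≥ 0 let i_j := ∫_ℝ r^{2j} √(1 + r²) μ(r) dr, where μ(r) := (2π)^{−1/2} e^{−r²/2}. Then all i_j are finite, and for every integer j ≥ 2 one has i_j = (2j − 1) i_{j−1} + (2j − 3) i_{j−2}. -/
open MeasureTheory

/-- The standard Gaussian density `μ(r) = (2π)^{-1/2} e^{-r²/2}`. -/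
noncomputable def gaussDensity (r : ℝ) : ℝ :=
  (Real.sqrt (2 * Real.pi))⁻¹ * Real.exp (-r ^ 2 / 2)

/-- `i_j = ∫_ℝ r^{2j} √(1 + r²) μ(r) dr`. -/
noncomputable def iGauss (j : ℕ) : ℝ :=
  ∫ r : ℝ, r ^ (2 * j) * Real.sqrt (1 + r ^ 2) * gaussDensity r

open Real Filter Asymptotics

lemma sqrt1_pos (r : ℝ) : 0 < Real.sqrt (1 + r ^ 2) := Real.sqrt_pos.2 (by positivity)

lemma sq_sqrt1 (r : ℝ) : Real.sqrt (1 + r ^ 2) ^ 2 = 1 + r ^ 2 :=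
  Real.sq_sqrt (by positivity)

lemma sqrt1_le (r : ℝ) : Real.sqrt (1 + r ^ 2) ≤ 1 + r ^ 2 := by
  calc Real.sqrt (1 + r ^ 2) ≤ Real.sqrt ((1 + r ^ 2) ^ 2) :=
        Real.sqrt_le_sqrt (by nlinarith [sq_nonneg r, sq_nonneg (r^2)])
    _ = 1 + r ^ 2 := Real.sqrt_sq (by positivity)

lemma one_le_sqrt1 (r : ℝ) : 1 ≤ Real.sqrt (1 + r ^ 2) := by
  have h := Real.sqrt_le_sqrt (show (1:ℝ) ≤ 1 + r ^ 2 by nlinarith [sq_nonneg r])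
  simpa using h

lemma gauss_pos (r : ℝ) : 0 < gaussDensity r := by
  unfold gaussDensity
  have := Real.pi_pos
  positivity

lemma hasDerivAt_gauss (r : ℝ) : HasDerivAt gaussDensity (-r * gaussDensity r) r := by
  have h1 : HasDerivAt (fun r : ℝ => -r ^ 2 / 2) (-r) r := by
    have := ((hasDerivAt_pow 2 r).neg).div_const 2
    refine this.congr_deriv ?_
    push_cast; ring
  have h2 := (h1.exp).const_mul ((Real.sqrt (2 * Real.pi))⁻¹)
  unfold gaussDensity
  refine h2.congr_deriv ?_
  ring

lemma integrable_even_pow_gauss (n : ℕ) :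
    Integrable fun r : ℝ => r ^ (2 * n) * gaussDensity r := by
  have h := integrable_rpow_mul_exp_neg_mul_sq (b := 1/2) (by norm_num)
    (s := ((2 * n : ℕ) : ℝ)) (neg_one_lt_zero.trans_le (Nat.cast_nonneg _))
  have h2 := h.const_mul ((Real.sqrt (2 * Real.pi))⁻¹)
  refine h2.congr (Filter.Eventually.of_forall fun r => ?_)
  simp only [Real.rpow_natCast]
  unfold gaussDensity
  rw [show -(1/2 : ℝ) * r ^ 2 = -r ^ 2 / 2 by ring]
  ring

lemma cont_F (n : ℕ) :
    Continuous fun r : ℝ => r ^ n * Real.sqrt (1 + r ^ 2) * gaussDensity r := by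
  unfold gaussDensity; fun_prop

lemma intF (n : ℕ) :
    Integrable fun r : ℝ => r ^ (2 * n) * Real.sqrt (1 + r ^ 2) * gaussDensity r := by
  have hg := (integrable_even_pow_gauss n).add (integrable_even_pow_gauss (n + 1))
  refine hg.mono' (cont_F (2*n)).aestronglyMeasurable
    (Filter.Eventually.of_forall fun r => ?_)
  have h0 : (0:ℝ) ≤ r ^ (2*n) := by rw [pow_mul]; positivity
  have hμ := (gauss_pos r).le
  rw [Real.norm_eq_abs,
    abs_of_nonneg (mul_nonneg (mul_nonneg h0 (Real.sqrt_nonneg _)) hμ)]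
  calc r ^ (2*n) * Real.sqrt (1 + r ^ 2) * gaussDensity r
      ≤ r ^ (2*n) * (1 + r ^ 2) * gaussDensity r :=
        mul_le_mul_of_nonneg_right
          (mul_le_mul_of_nonneg_left (sqrt1_le r) h0) hμ
    _ = r ^ (2*n) * gaussDensity r + r ^ (2*(n+1)) * gaussDensity r := by ring

lemma intK (n : ℕ) :
    Integrable fun r : ℝ => r ^ (2 * n) / Real.sqrt (1 + r ^ 2) * gaussDensity r := by
  refine (integrable_even_pow_gauss n).mono'
    ?_ (Filter.Eventually.of_forall fun r => ?_)
  · have : Continuous fun r : ℝ => r ^ (2*n) / Real.sqrt (1 + r ^ 2) * gaussDensity r := by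
      unfold gaussDensity
      apply Continuous.mul _ (by fun_prop)
      exact (continuous_pow _).div (by fun_prop) (fun r => (sqrt1_pos r).ne')
    exact this.aestronglyMeasurable
  · have h0 : (0:ℝ) ≤ r ^ (2*n) := by rw [pow_mul]; positivity
    have hμ := (gauss_pos r).le
    have hs := sqrt1_pos r
    rw [Real.norm_eq_abs,
      abs_of_nonneg (mul_nonneg (div_nonneg h0 hs.le) hμ)]
    have : r ^ (2*n) / Real.sqrt (1 + r ^ 2) ≤ r ^ (2*n) := by
      rw [div_le_iff₀ hs]
      nlinarith [one_le_sqrt1 r]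
    exact mul_le_mul_of_nonneg_right this hμ

lemma tendsto_pow_gauss_top (k : ℕ) :
    Tendsto (fun r : ℝ => |r| ^ k * Real.exp (-r ^ 2 / 2)) atTop (nhds 0) := by
  have h := rpow_mul_exp_neg_mul_sq_isLittleO_exp_neg (b := 1/2) (by norm_num) (k : ℝ)
  have h0 : Tendsto (fun x : ℝ => Real.exp (-(1/2) * x)) atTop (nhds 0) := by
    apply Real.tendsto_exp_atBot.comp
    exact (tendsto_const_mul_atBot_of_neg (by norm_num)).2 tendsto_id
  have h1 := h.isBigO.trans_tendsto h0
  refine h1.congr' ?_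
  filter_upwards [eventually_ge_atTop (0:ℝ)] with x hx
  rw [Real.rpow_natCast, abs_of_nonneg hx,
    show -(1/2 : ℝ) * x ^ 2 = -x ^ 2 / 2 by ring]

lemma tendsto_pow_gauss_bot (k : ℕ) :
    Tendsto (fun r : ℝ => |r| ^ k * Real.exp (-r ^ 2 / 2)) atBot (nhds 0) := by
  have := (tendsto_pow_gauss_top k).comp tendsto_neg_atBot_atTop
  refine this.congr fun x => ?_
  simp [neg_pow, Function.comp]

lemma Ftend (m : ℕ) (l : Filter ℝ)
    (hl : ∀ k : ℕ, Tendsto (fun r : ℝ => |r| ^ k * Real.exp (-r ^ 2 / 2)) l (nhds 0)) :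
    Tendsto (fun r : ℝ => r ^ m * Real.sqrt (1 + r ^ 2) * gaussDensity r) l (nhds 0) := by
  have hc : Tendsto (fun r : ℝ => (Real.sqrt (2 * Real.pi))⁻¹ *
      (|r| ^ m * Real.exp (-r ^ 2 / 2) + |r| ^ (m+2) * Real.exp (-r ^ 2 / 2))) l (nhds 0) := by
    have := ((hl m).add (hl (m+2))).const_mul ((Real.sqrt (2 * Real.pi))⁻¹)
    simpa using this
  refine squeeze_zero_norm (fun r => ?_) hc
  have hμ := (gauss_pos r).le
  have hs := (sqrt1_pos r).le
  have hpi : (0:ℝ) < Real.sqrt (2 * Real.pi) := Real.sqrt_pos.2 (by positivity)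
  rw [Real.norm_eq_abs, abs_mul, abs_mul, abs_pow, abs_of_nonneg hs, abs_of_nonneg hμ]
  calc |r| ^ m * Real.sqrt (1 + r ^ 2) * gaussDensity r
      ≤ |r| ^ m * (1 + r ^ 2) * gaussDensity r :=
        mul_le_mul_of_nonneg_right
          (mul_le_mul_of_nonneg_left (sqrt1_le r) (by positivity)) hμ
    _ = (Real.sqrt (2 * Real.pi))⁻¹ *
        (|r| ^ m * Real.exp (-r ^ 2 / 2) + |r| ^ (m+2) * Real.exp (-r ^ 2 / 2)) := by
        unfold gaussDensity
        rw [show |r| ^ (m+2) = |r| ^ m * |r| ^ 2 by ring, sq_abs]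
        ring

lemma ibp (j : ℕ) (hj : 1 ≤ j) :
    (∫ r : ℝ, r ^ (2 * j) * Real.sqrt (1 + r ^ 2) * gaussDensity r)
      = (2 * (j : ℝ) - 1) * (∫ r : ℝ, r ^ (2 * (j - 1)) * Real.sqrt (1 + r ^ 2) * gaussDensity r)
        + ∫ r : ℝ, r ^ (2 * j) / Real.sqrt (1 + r ^ 2) * gaussDensity r := by
  obtain ⟨i, rfl⟩ : ∃ i, j = i + 1 := ⟨j - 1, by omega⟩
  set m := 2 * i + 1 with hm
  have hF : ∀ r : ℝ, HasDerivAt (fun r : ℝ => r ^ m * Real.sqrt (1 + r ^ 2) * gaussDensity r)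
      ((m : ℝ) * (r ^ (2 * i) * Real.sqrt (1 + r ^ 2) * gaussDensity r)
        + r ^ (2 * (i + 1)) / Real.sqrt (1 + r ^ 2) * gaussDensity r
        - r ^ (2 * (i + 1)) * Real.sqrt (1 + r ^ 2) * gaussDensity r) r := by
    intro r
    have hs : HasDerivAt (fun r : ℝ => Real.sqrt (1 + r ^ 2)) (r / Real.sqrt (1 + r ^ 2)) r := by
      have h1 : HasDerivAt (fun r : ℝ => 1 + r ^ 2) (2 * r) r := by
        simpa using ((hasDerivAt_pow 2 r).const_add 1)
      have h2 := (Real.hasDerivAt_sqrt (by positivity : (1:ℝ) + r ^ 2 ≠ 0)).comp r h1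
      refine h2.congr_deriv ?_
      field_simp
      try ring
    have hp : HasDerivAt (fun r : ℝ => r ^ m) ((m : ℝ) * r ^ (2 * i)) r := by
      have := hasDerivAt_pow m r
      rw [show m - 1 = 2 * i by omega] at this
      exact this
    have hd := (hp.mul hs).mul (hasDerivAt_gauss r)
    refine hd.congr_deriv ?_
    have h2 : Real.sqrt (1 + r ^ 2) ≠ 0 := (sqrt1_pos r).ne'
    simp only [Pi.mul_apply, hm]
    field_simp
    try ring
  have hint : Integrable fun r : ℝ =>
      (m : ℝ) * (r ^ (2 * i) * Real.sqrt (1 + r ^ 2) * gaussDensity r)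
        + r ^ (2 * (i + 1)) / Real.sqrt (1 + r ^ 2) * gaussDensity r
        - r ^ (2 * (i + 1)) * Real.sqrt (1 + r ^ 2) * gaussDensity r :=
    (((intF i).const_mul (m : ℝ)).add (intK (i + 1))).sub (intF (i + 1))
  have htop := Ftend m atTop tendsto_pow_gauss_top
  have hbot := Ftend m atBot tendsto_pow_gauss_bot
  have hzero := integral_of_hasDerivAt_of_tendsto hF hint hbot htop
  rw [sub_zero] at hzero
  have hA : Integrable fun r : ℝ =>
      (m : ℝ) * (r ^ (2 * i) * Real.sqrt (1 + r ^ 2) * gaussDensity r) :=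
    (intF i).const_mul (m : ℝ)
  have hB : Integrable fun r : ℝ =>
      r ^ (2 * (i + 1)) / Real.sqrt (1 + r ^ 2) * gaussDensity r := intK (i + 1)
  have hAB : Integrable fun r : ℝ =>
      (m : ℝ) * (r ^ (2 * i) * Real.sqrt (1 + r ^ 2) * gaussDensity r)
        + r ^ (2 * (i + 1)) / Real.sqrt (1 + r ^ 2) * gaussDensity r := hA.add hB
  rw [integral_sub hAB (intF (i + 1)), integral_add hA hB, integral_const_mul] at hzero
  have hcoe : ((m : ℕ) : ℝ) = 2 * ((i : ℝ) + 1) - 1 := by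
    rw [hm]; push_cast; ring
  rw [hcoe] at hzero
  have hsub : (i + 1) - 1 = i := by omega
  rw [hsub]
  push_cast
  linarith

lemma kk (j : ℕ) (hj : 1 ≤ j) :
    (∫ r : ℝ, r ^ (2 * j) / Real.sqrt (1 + r ^ 2) * gaussDensity r)
      = (∫ r : ℝ, r ^ (2 * (j - 1)) * Real.sqrt (1 + r ^ 2) * gaussDensity r)
        - ∫ r : ℝ, r ^ (2 * (j - 1)) / Real.sqrt (1 + r ^ 2) * gaussDensity r := by
  obtain ⟨i, rfl⟩ : ∃ i, j = i + 1 := ⟨j - 1, by omega⟩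
  have hsub : (i + 1) - 1 = i := by omega
  rw [hsub, ← integral_sub (intF i) (intK i)]
  refine integral_congr_ae (Filter.Eventually.of_forall fun r => ?_)
  have h2 : Real.sqrt (1 + r ^ 2) ≠ 0 := (sqrt1_pos r).ne'
  have h3 := sq_sqrt1 r
  field_simp
  linear_combination (-(r ^ (2 * i)) * gaussDensity r) * h3

/-- All the integrals `i_j` are finite, and for `j ≥ 2` the recursion
`i_j = (2j - 1) i_{j-1} + (2j - 3) i_{j-2}` holds. -/
theorem iGauss_integrable_and_recursion :
    (∀ j : ℕ, Integrable fun r : ℝ => r ^ (2 * j) * Real.sqrt (1 + r ^ 2) * gaussDensity r) ∧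
    ∀ j : ℕ, 2 ≤ j →
      iGauss j = (2 * (j : ℝ) - 1) * iGauss (j - 1) + (2 * (j : ℝ) - 3) * iGauss (j - 2) := by
  refine ⟨intF, fun j hj => ?_⟩
  obtain ⟨i, rfl⟩ : ∃ i, j = i + 2 := ⟨j - 2, by omega⟩
  have h1 := ibp (i + 2) (by omega)
  have h2 := ibp (i + 1) (by omega)
  have h3 := kk (i + 2) (by omega)
  have e1 : i + 2 - 1 = i + 1 := by omega
  have e2 : i + 2 - 2 = i := by omega
  have e3 : i + 1 - 1 = i := by omega
  rw [e1, e2] at *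
  rw [e3] at h2
  unfold iGauss
  push_cast at *
  linarith
end

section
/- For all m > 0 and θ > 0, the integrals below are finite and ∫_{ℝ³} (p₁² / √(m² + |p|²)) e^{−√(m² + |p|²)/θ} dp = θ ∫_{ℝ³} e^{−√(m² + |p|²)/θ} dp; by symmetry the same identity holds with p₁ replaced by p₂ or p₃. -/
open MeasureTheory Real Set Filter Topology


private lemma key_bound {b t : ℝ} (hb : 0 < b) (ht : 0 ≤ t) :
    t * Real.exp (-(b * t)) ≤ (2 / b) * Real.exp (-(b / 2 * t)) := by
  have h1 : b / 2 * t ≤ Real.exp (b / 2 * t) :=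
    le_trans (by linarith) (Real.add_one_le_exp _)
  have h2 : t ≤ 2 / b * Real.exp (b / 2 * t) := by
    calc t = 2 / b * (b / 2 * t) := by field_simp
      _ ≤ 2 / b * Real.exp (b / 2 * t) :=
        mul_le_mul_of_nonneg_left h1 (by positivity)
  calc t * Real.exp (-(b * t))
      ≤ (2 / b * Real.exp (b / 2 * t)) * Real.exp (-(b * t)) :=
        mul_le_mul_of_nonneg_right h2 (Real.exp_pos _).le
    _ = (2 / b) * Real.exp (-(b / 2 * t)) := by
        rw [mul_assoc, ← Real.exp_add]; congr 2; ring

private lemma integrable_of_even' {f : ℝ → ℝ} (he : ∀ x, f (-x) = f x)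
    (h : IntegrableOn f (Ioi 0)) (hm : AEStronglyMeasurable f volume) : Integrable f := by
  have hIci : IntegrableOn f (Ici 0) := (integrableOn_Ici_iff_integrableOn_Ioi).mpr h
  have h1 : Integrable ((Ici (0:ℝ)).indicator f) :=
    (integrable_indicator_iff measurableSet_Ici).mpr hIci
  have h2 : Integrable (fun x => (Ici (0:ℝ)).indicator f (-x)) := h1.comp_neg
  have h3 : Integrable ((Iic (0:ℝ)).indicator f) := by
    refine h2.congr (Eventually.of_forall fun x => ?_)
    simp only [Set.indicator_apply, mem_Ici, mem_Iic, neg_nonneg, he]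
  have h4 : Integrable ((Ioi (0:ℝ)).indicator f) :=
    (integrable_indicator_iff measurableSet_Ioi).mpr h
  refine (h3.add h4).congr (Eventually.of_forall fun x => ?_)
  rw [Pi.add_apply]
  rcases le_or_gt x 0 with hx | hx
  · rw [Set.indicator_of_mem (mem_Iic.mpr hx),
      Set.indicator_of_notMem (by simp [not_lt.mpr hx]), add_zero]
  · rw [Set.indicator_of_notMem (by simp [not_le.mpr hx]),
      Set.indicator_of_mem (mem_Ioi.mpr hx), zero_add]

private lemma exp_abs_integrable {b : ℝ} (hb : 0 < b) :
    Integrable (fun x : ℝ => Real.exp (-(b * |x|))) := by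
  refine integrable_of_even' (fun x => by rw [abs_neg]) ?_ ?_
  · refine (exp_neg_integrableOn_Ioi 0 hb).congr_fun (fun x hx => ?_) measurableSet_Ioi
    beta_reduce
    rw [abs_of_pos hx, neg_mul]
  · exact (Real.continuous_exp.comp ((continuous_const.mul continuous_abs).neg)).aestronglyMeasurable

private lemma abs_exp_abs_integrable {b : ℝ} (hb : 0 < b) :
    Integrable (fun x : ℝ => |x| * Real.exp (-(b * |x|))) := by
  refine ((exp_abs_integrable (by positivity : (0:ℝ) < b / 2)).const_mul (2 / b)).mono'
    ((continuous_abs.mul (Real.continuous_exp.comp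
      ((continuous_const.mul continuous_abs).neg))).aestronglyMeasurable)
    (Eventually.of_forall fun x => ?_)
  rw [Real.norm_eq_abs, abs_of_nonneg (by positivity)]
  exact key_bound hb (abs_nonneg x)


private lemma oneDim {a θ : ℝ} (ha : 0 < a) (hθ : 0 < θ) :
    Integrable (fun x : ℝ => Real.exp (-Real.sqrt (a + x ^ 2) / θ)) ∧
    Integrable (fun x : ℝ =>
      x ^ 2 / Real.sqrt (a + x ^ 2) * Real.exp (-Real.sqrt (a + x ^ 2) / θ)) ∧
    (∫ x : ℝ, x ^ 2 / Real.sqrt (a + x ^ 2) * Real.exp (-Real.sqrt (a + x ^ 2) / θ))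
      = θ * ∫ x : ℝ, Real.exp (-Real.sqrt (a + x ^ 2) / θ) := by
  have hspos : ∀ x : ℝ, 0 < Real.sqrt (a + x ^ 2) := fun x => Real.sqrt_pos.mpr (by positivity)
  have habs : ∀ x : ℝ, |x| ≤ Real.sqrt (a + x ^ 2) := fun x => by
    rw [← Real.sqrt_sq_eq_abs]
    exact Real.sqrt_le_sqrt (by linarith)
  have hscont : Continuous fun x : ℝ => Real.sqrt (a + x ^ 2) :=
    (continuous_const.add (continuous_pow 2)).sqrt
  have hgcont : Continuous fun x : ℝ => Real.exp (-Real.sqrt (a + x ^ 2) / θ) :=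
    Real.continuous_exp.comp (hscont.neg.div_const θ)
  have hfcont : Continuous fun x : ℝ =>
      x ^ 2 / Real.sqrt (a + x ^ 2) * Real.exp (-Real.sqrt (a + x ^ 2) / θ) :=
    ((continuous_pow 2).div hscont fun x => (hspos x).ne').mul hgcont
  have hgle : ∀ x : ℝ, Real.exp (-Real.sqrt (a + x ^ 2) / θ) ≤ Real.exp (-(1/θ * |x|)) := by
    intro x
    rw [Real.exp_le_exp, neg_div, show -(1/θ * |x|) = -(|x| / θ) by ring, neg_le_neg_iff]
    gcongr
    exact habs x
  -- (i)
  have hgint : Integrable (fun x : ℝ => Real.exp (-Real.sqrt (a + x ^ 2) / θ)) := by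
    refine (exp_abs_integrable (by positivity : (0:ℝ) < 1/θ)).mono'
      hgcont.aestronglyMeasurable (Eventually.of_forall fun x => ?_)
    rw [Real.norm_eq_abs, abs_of_nonneg (Real.exp_pos _).le]
    exact hgle x
  -- (ii)
  have hwle : ∀ x : ℝ, x ^ 2 / Real.sqrt (a + x ^ 2) ≤ |x| := by
    intro x
    rw [div_le_iff₀ (hspos x)]
    calc x ^ 2 = |x| * |x| := by rw [abs_mul_abs_self, sq]
      _ ≤ |x| * Real.sqrt (a + x ^ 2) := mul_le_mul_of_nonneg_left (habs x) (abs_nonneg x)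
  have hfint : Integrable (fun x : ℝ =>
      x ^ 2 / Real.sqrt (a + x ^ 2) * Real.exp (-Real.sqrt (a + x ^ 2) / θ)) := by
    refine (abs_exp_abs_integrable (by positivity : (0:ℝ) < 1/θ)).mono'
      hfcont.aestronglyMeasurable (Eventually.of_forall fun x => ?_)
    rw [Real.norm_eq_abs, abs_of_nonneg (by positivity)]
    exact mul_le_mul (hwle x) (hgle x) (Real.exp_pos _).le (abs_nonneg x)
  refine ⟨hgint, hfint, ?_⟩
  -- (iii) integration by parts
  set H : ℝ → ℝ := fun x => x * Real.exp (-Real.sqrt (a + x ^ 2) / θ) with hH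
  set φ : ℝ → ℝ := fun x => Real.exp (-Real.sqrt (a + x ^ 2) / θ)
    - x ^ 2 / Real.sqrt (a + x ^ 2) * Real.exp (-Real.sqrt (a + x ^ 2) / θ) / θ with hφ
  have hderiv : ∀ x : ℝ, HasDerivAt H (φ x) x := by
    intro x
    have h1 : HasDerivAt (fun x : ℝ => a + x ^ 2) (2 * x) x := by
      simpa using (hasDerivAt_pow 2 x).const_add a
    have h2 : HasDerivAt (fun x : ℝ => Real.sqrt (a + x ^ 2))
        (x / Real.sqrt (a + x ^ 2)) x := by
      have h3 := (Real.hasDerivAt_sqrt (by positivity : a + x ^ 2 ≠ 0)).comp x h1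
      refine h3.congr_deriv ?_
      field_simp
    have h4 : HasDerivAt (fun x : ℝ => Real.exp (-Real.sqrt (a + x ^ 2) / θ))
        (Real.exp (-Real.sqrt (a + x ^ 2) / θ) * (-(x / Real.sqrt (a + x ^ 2)) / θ)) x :=
      (h2.neg.div_const θ).exp
    have h5 := (hasDerivAt_id x).mul h4
    refine h5.congr_deriv ?_
    simp only [hφ, id_eq, one_mul]
    ring
  have hφint : Integrable φ := hgint.sub (hfint.div_const θ)
  -- decay bound
  set B : ℝ → ℝ := fun x => (2 / (1/θ)) * Real.exp (-(1/θ/2 * |x|)) with hB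
  have hHB : ∀ x : ℝ, ‖H x‖ ≤ B x := by
    intro x
    rw [hH, Real.norm_eq_abs, abs_mul, abs_of_nonneg (Real.exp_pos _).le]
    calc |x| * Real.exp (-Real.sqrt (a + x ^ 2) / θ)
        ≤ |x| * Real.exp (-(1/θ * |x|)) :=
          mul_le_mul_of_nonneg_left (hgle x) (abs_nonneg x)
      _ ≤ B x := key_bound (by positivity) (abs_nonneg x)
  have hBtend : ∀ l : Filter ℝ, Tendsto (fun x : ℝ => |x|) l atTop → Tendsto B l (𝓝 0) := by
    intro l hl
    have h1 : Tendsto (fun x : ℝ => 1/θ/2 * |x|) l atTop :=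
      hl.const_mul_atTop (by positivity)
    have h1' : Tendsto (fun x : ℝ => -(1/θ/2 * |x|)) l atBot :=
      tendsto_neg_atTop_atBot.comp h1
    have h2 := Real.tendsto_exp_atBot.comp h1'
    have h3 := h2.const_mul (2 / (1/θ))
    simpa [hB, Function.comp_def, mul_zero] using h3
  have htop : Tendsto H atTop (𝓝 0) :=
    squeeze_zero_norm hHB (hBtend atTop tendsto_abs_atTop_atTop)
  have hbot : Tendsto H atBot (𝓝 0) :=
    squeeze_zero_norm hHB (hBtend atBot tendsto_abs_atBot_atTop)
  have hIoi : ∫ x in Ioi (0:ℝ), φ x = 0 - H 0 :=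
    integral_Ioi_of_hasDerivAt_of_tendsto' (fun x _ => hderiv x) hφint.integrableOn htop
  have hIic : ∫ x in Iic (0:ℝ), φ x = H 0 - 0 :=
    integral_Iic_of_hasDerivAt_of_tendsto' (fun x _ => hderiv x) hφint.integrableOn hbot
  have hH0 : H 0 = 0 := by simp [hH]
  have htot : ∫ x : ℝ, φ x = 0 := by
    rw [← intervalIntegral.integral_Iic_add_Ioi hφint.integrableOn hφint.integrableOn, hIoi, hIic, hH0]
    ring
  rw [hφ] at htot
  rw [integral_sub hgint (hfint.div_const θ), integral_div] at htot
  have hne := hθ.ne'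
  have h6 : (∫ x : ℝ, x ^ 2 / Real.sqrt (a + x ^ 2) * Real.exp (-Real.sqrt (a + x ^ 2) / θ)) / θ
      = ∫ x : ℝ, Real.exp (-Real.sqrt (a + x ^ 2) / θ) := by linarith
  rw [div_eq_iff hne] at h6
  linarith


private lemma piInt (m θ : ℝ) (hm : 0 < m) (hθ : 0 < θ) :
    (Integrable fun p : Fin 3 → ℝ =>
      Real.exp (-Real.sqrt (m ^ 2 + ∑ j, (p j) ^ 2) / θ)) ∧
    (∀ i : Fin 3, Integrable fun p : Fin 3 → ℝ =>
      (p i) ^ 2 / Real.sqrt (m ^ 2 + ∑ j, (p j) ^ 2) *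
        Real.exp (-Real.sqrt (m ^ 2 + ∑ j, (p j) ^ 2) / θ)) ∧
    ∀ i : Fin 3,
      (∫ p : Fin 3 → ℝ, (p i) ^ 2 / Real.sqrt (m ^ 2 + ∑ j, (p j) ^ 2) *
          Real.exp (-Real.sqrt (m ^ 2 + ∑ j, (p j) ^ 2) / θ))
        = θ * ∫ p : Fin 3 → ℝ, Real.exp (-Real.sqrt (m ^ 2 + ∑ j, (p j) ^ 2) / θ) := by
  have h3 : (0:ℝ) < Real.sqrt 3 := Real.sqrt_pos.mpr (by norm_num)
  set b : ℝ := 1 / (Real.sqrt 3 * θ) with hbdef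
  have hb : 0 < b := by positivity
  have hSpos : ∀ p : Fin 3 → ℝ, (0:ℝ) < m ^ 2 + ∑ j, (p j) ^ 2 := by
    intro p
    have : (0:ℝ) ≤ ∑ j, (p j) ^ 2 := Finset.sum_nonneg fun j _ => sq_nonneg _
    positivity
  have hspos : ∀ p : Fin 3 → ℝ, (0:ℝ) < Real.sqrt (m ^ 2 + ∑ j, (p j) ^ 2) :=
    fun p => Real.sqrt_pos.mpr (hSpos p)
  -- sum of abs bound
  have hsum : ∀ p : Fin 3 → ℝ,
      (∑ j, |p j|) / Real.sqrt 3 ≤ Real.sqrt (m ^ 2 + ∑ j, (p j) ^ 2) := by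
    intro p
    apply Real.le_sqrt_of_sq_le
    have h1 : (∑ j, |p j|) ^ 2 ≤ 3 * ∑ j, (p j) ^ 2 := by
      have := sq_sum_le_card_mul_sum_sq (s := (Finset.univ : Finset (Fin 3)))
        (f := fun j => |p j|)
      simpa [sq_abs] using this
    rw [div_pow, Real.sq_sqrt (by norm_num : (3:ℝ) ≥ 0)]
    rw [div_le_iff₀ (by norm_num : (0:ℝ) < 3)]
    nlinarith [sq_nonneg m]
  -- exponential bound
  have hgle : ∀ p : Fin 3 → ℝ,
      Real.exp (-Real.sqrt (m ^ 2 + ∑ j, (p j) ^ 2) / θ)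
        ≤ ∏ j, Real.exp (-(b * |p j|)) := by
    intro p
    rw [← Real.exp_sum]
    apply Real.exp_le_exp.mpr
    have h1 : ∑ j, -(b * |p j|) = -((∑ j, |p j|) / Real.sqrt 3 / θ) := by
      rw [Finset.sum_neg_distrib, ← Finset.mul_sum, hbdef]
      field_simp
    rw [h1, neg_div, neg_le_neg_iff]
    gcongr
    exact hsum p
  -- continuity
  have hcontS : Continuous fun p : Fin 3 → ℝ => m ^ 2 + ∑ j, (p j) ^ 2 :=
    continuous_const.add (continuous_finset_sum _ fun j _ => (continuous_apply j).pow 2)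
  have hgcont : Continuous fun p : Fin 3 → ℝ =>
      Real.exp (-Real.sqrt (m ^ 2 + ∑ j, (p j) ^ 2) / θ) :=
    Real.continuous_exp.comp (hcontS.sqrt.neg.div_const θ)
  -- integrability of the density
  have hA : Integrable fun p : Fin 3 → ℝ =>
      Real.exp (-Real.sqrt (m ^ 2 + ∑ j, (p j) ^ 2) / θ) := by
    refine (Integrable.fintype_prod (f := fun _ : Fin 3 => fun x : ℝ =>
        Real.exp (-(b * |x|))) fun _ => exp_abs_integrable hb).mono'
      hgcont.aestronglyMeasurable (Eventually.of_forall fun p => ?_)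
    rw [Real.norm_eq_abs, abs_of_nonneg (Real.exp_pos _).le]
    exact hgle p
  -- coordinate bound
  have habsi : ∀ (i : Fin 3) (p : Fin 3 → ℝ),
      |p i| ≤ Real.sqrt (m ^ 2 + ∑ j, (p j) ^ 2) := by
    intro i p
    apply Real.le_sqrt_of_sq_le
    rw [sq_abs]
    have h1 : (p i) ^ 2 ≤ ∑ j, (p j) ^ 2 :=
      Finset.single_le_sum (f := fun j => (p j) ^ 2) (fun j _ => sq_nonneg _)
        (Finset.mem_univ i)
    nlinarith [sq_nonneg m]
  have hwle : ∀ (i : Fin 3) (p : Fin 3 → ℝ),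
      (p i) ^ 2 / Real.sqrt (m ^ 2 + ∑ j, (p j) ^ 2) ≤ |p i| := by
    intro i p
    rw [div_le_iff₀ (hspos p)]
    calc (p i) ^ 2 = |p i| * |p i| := by rw [abs_mul_abs_self, sq]
      _ ≤ |p i| * Real.sqrt (m ^ 2 + ∑ j, (p j) ^ 2) :=
        mul_le_mul_of_nonneg_left (habsi i p) (abs_nonneg _)
  have hfcont : ∀ i : Fin 3, Continuous fun p : Fin 3 → ℝ =>
      (p i) ^ 2 / Real.sqrt (m ^ 2 + ∑ j, (p j) ^ 2) *
        Real.exp (-Real.sqrt (m ^ 2 + ∑ j, (p j) ^ 2) / θ) := fun i =>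
    (((continuous_apply i).pow 2).div hcontS.sqrt fun p => (hspos p).ne').mul hgcont
  have hB : ∀ i : Fin 3, Integrable fun p : Fin 3 → ℝ =>
      (p i) ^ 2 / Real.sqrt (m ^ 2 + ∑ j, (p j) ^ 2) *
        Real.exp (-Real.sqrt (m ^ 2 + ∑ j, (p j) ^ 2) / θ) := by
    intro i
    have hint : ∀ j : Fin 3, Integrable fun x : ℝ =>
        (if j = i then |x| else 1) * Real.exp (-(b * |x|)) := by
      intro j
      by_cases hj : j = i
      · simpa [hj] using abs_exp_abs_integrable hb
      · simpa [hj] using exp_abs_integrable hb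
    refine (Integrable.fintype_prod (f := fun j : Fin 3 => fun x : ℝ =>
        (if j = i then |x| else 1) * Real.exp (-(b * |x|))) hint).mono'
      (hfcont i).aestronglyMeasurable (Eventually.of_forall fun p => ?_)
    have hprod : ∏ j, ((if j = i then |p j| else 1) * Real.exp (-(b * |p j|)))
        = |p i| * ∏ j, Real.exp (-(b * |p j|)) := by
      rw [Finset.prod_mul_distrib]
      congr 1
      simp
    rw [Real.norm_eq_abs, abs_of_nonneg (by positivity), hprod]
    calc (p i) ^ 2 / Real.sqrt (m ^ 2 + ∑ j, (p j) ^ 2) *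
          Real.exp (-Real.sqrt (m ^ 2 + ∑ j, (p j) ^ 2) / θ)
        ≤ |p i| * Real.exp (-Real.sqrt (m ^ 2 + ∑ j, (p j) ^ 2) / θ) :=
          mul_le_mul_of_nonneg_right (hwle i p) (Real.exp_pos _).le
      _ ≤ |p i| * ∏ j, Real.exp (-(b * |p j|)) :=
          mul_le_mul_of_nonneg_left (hgle p) (abs_nonneg _)
  refine ⟨hA, hB, ?_⟩
  -- the identity, via Fubini in coordinate i
  intro i
  have mp := (measurePreserving_piFinSuccAbove (fun _ : Fin 3 => (volume : Measure ℝ)) i).symm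
  set e := MeasurableEquiv.piFinSuccAbove (fun _ : Fin 3 => ℝ) i with he
  have hins : ∀ (x : ℝ) (y : Fin 2 → ℝ) (j : Fin 3), True := fun _ _ _ => trivial
  have hsum' : ∀ (x : ℝ) (y : Fin 2 → ℝ),
      m ^ 2 + ∑ j, ((e.symm (x, y)) j) ^ 2 = (m ^ 2 + ∑ k, (y k) ^ 2) + x ^ 2 := by
    intro x y
    rw [Fin.sum_univ_succAbove (fun j => ((e.symm (x, y)) j) ^ 2) i]
    simp only [he, MeasurableEquiv.piFinSuccAbove_symm_apply, Fin.insertNthEquiv,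
      Equiv.coe_fn_mk, Fin.insertNth_apply_same, Fin.insertNth_apply_succAbove]
    ring
  have hxcoord : ∀ (x : ℝ) (y : Fin 2 → ℝ), (e.symm (x, y)) i = x := by
    intro x y
    simp [he, MeasurableEquiv.piFinSuccAbove_symm_apply, Fin.insertNthEquiv,
      Fin.insertNth_apply_same]
  have hemb := e.symm.measurableEmbedding
  have hApos : ∀ y : Fin 2 → ℝ, (0:ℝ) < m ^ 2 + ∑ k, (y k) ^ 2 := by
    intro y
    have : (0:ℝ) ≤ ∑ k, (y k) ^ 2 := Finset.sum_nonneg fun k _ => sq_nonneg _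
    positivity
  -- transfer integrability through e.symm
  have hA' : Integrable (fun q : ℝ × (Fin 2 → ℝ) =>
      Real.exp (-Real.sqrt (m ^ 2 + ∑ j, ((e.symm q) j) ^ 2) / θ)) :=
    (mp.integrable_comp_emb hemb).mpr hA
  have hB' : Integrable (fun q : ℝ × (Fin 2 → ℝ) =>
      ((e.symm q) i) ^ 2 / Real.sqrt (m ^ 2 + ∑ j, ((e.symm q) j) ^ 2) *
        Real.exp (-Real.sqrt (m ^ 2 + ∑ j, ((e.symm q) j) ^ 2) / θ)) :=
    (mp.integrable_comp_emb hemb).mpr (hB i)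
  calc (∫ p : Fin 3 → ℝ, (p i) ^ 2 / Real.sqrt (m ^ 2 + ∑ j, (p j) ^ 2) *
          Real.exp (-Real.sqrt (m ^ 2 + ∑ j, (p j) ^ 2) / θ))
      = ∫ q : ℝ × (Fin 2 → ℝ), ((e.symm q) i) ^ 2 /
          Real.sqrt (m ^ 2 + ∑ j, ((e.symm q) j) ^ 2) *
          Real.exp (-Real.sqrt (m ^ 2 + ∑ j, ((e.symm q) j) ^ 2) / θ) :=
        (mp.integral_comp hemb _).symm
    _ = ∫ y : Fin 2 → ℝ, ∫ x : ℝ, ((e.symm (x, y)) i) ^ 2 /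
          Real.sqrt (m ^ 2 + ∑ j, ((e.symm (x, y)) j) ^ 2) *
          Real.exp (-Real.sqrt (m ^ 2 + ∑ j, ((e.symm (x, y)) j) ^ 2) / θ) :=
        integral_prod_symm _ hB'
    _ = ∫ y : Fin 2 → ℝ, θ * ∫ x : ℝ,
          Real.exp (-Real.sqrt (m ^ 2 + ∑ j, ((e.symm (x, y)) j) ^ 2) / θ) := by
        refine integral_congr_ae (Eventually.of_forall fun y => ?_)
        have h1 : ∀ x : ℝ, ((e.symm (x, y)) i) ^ 2 /
            Real.sqrt (m ^ 2 + ∑ j, ((e.symm (x, y)) j) ^ 2) *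
            Real.exp (-Real.sqrt (m ^ 2 + ∑ j, ((e.symm (x, y)) j) ^ 2) / θ)
            = x ^ 2 / Real.sqrt ((m ^ 2 + ∑ k, (y k) ^ 2) + x ^ 2) *
              Real.exp (-Real.sqrt ((m ^ 2 + ∑ k, (y k) ^ 2) + x ^ 2) / θ) := by
          intro x; rw [hsum', hxcoord]
        have h2 : ∀ x : ℝ,
            Real.exp (-Real.sqrt (m ^ 2 + ∑ j, ((e.symm (x, y)) j) ^ 2) / θ)
            = Real.exp (-Real.sqrt ((m ^ 2 + ∑ k, (y k) ^ 2) + x ^ 2) / θ) := by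
          intro x; rw [hsum']
        simp only [h1]
        simp only [h2]
        exact (oneDim (hApos y) hθ).2.2
    _ = θ * ∫ y : Fin 2 → ℝ, ∫ x : ℝ,
          Real.exp (-Real.sqrt (m ^ 2 + ∑ j, ((e.symm (x, y)) j) ^ 2) / θ) :=
        integral_const_mul θ _
    _ = θ * ∫ q : ℝ × (Fin 2 → ℝ),
          Real.exp (-Real.sqrt (m ^ 2 + ∑ j, ((e.symm q) j) ^ 2) / θ) :=
        congrArg (θ * ·) (integral_prod_symm _ hA').symm
    _ = θ * ∫ p : Fin 3 → ℝ, Real.exp (-Real.sqrt (m ^ 2 + ∑ j, (p j) ^ 2) / θ) :=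
        congrArg (θ * ·) (mp.integral_comp hemb
          (fun p : Fin 3 → ℝ => Real.exp (-Real.sqrt (m ^ 2 + ∑ j, (p j) ^ 2) / θ)))


/-- Second-moment identity for the Jüttner density: for `m, θ > 0` the integrals below are
finite and `∫ (p_i² / √(m² + |p|²)) e^{-√(m² + |p|²)/θ} dp = θ ∫ e^{-√(m² + |p|²)/θ} dp`
for every coordinate `i`. -/
theorem juttner_second_moment (m θ : ℝ) (hm : 0 < m) (hθ : 0 < θ) :
    (Integrable fun p : EuclideanSpace ℝ (Fin 3) =>
      Real.exp (-Real.sqrt (m ^ 2 + ‖p‖ ^ 2) / θ)) ∧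
    (∀ i : Fin 3, Integrable fun p : EuclideanSpace ℝ (Fin 3) =>
      (p i) ^ 2 / Real.sqrt (m ^ 2 + ‖p‖ ^ 2) * Real.exp (-Real.sqrt (m ^ 2 + ‖p‖ ^ 2) / θ)) ∧
    ∀ i : Fin 3,
      (∫ p : EuclideanSpace ℝ (Fin 3),
          (p i) ^ 2 / Real.sqrt (m ^ 2 + ‖p‖ ^ 2) * Real.exp (-Real.sqrt (m ^ 2 + ‖p‖ ^ 2) / θ))
        = θ * ∫ p : EuclideanSpace ℝ (Fin 3), Real.exp (-Real.sqrt (m ^ 2 + ‖p‖ ^ 2) / θ) := by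
  obtain ⟨hA, hB, hC⟩ := piInt m θ hm hθ
  have mpE := EuclideanSpace.volume_preserving_symm_measurableEquiv_toLp (Fin 3)
  have emb := (MeasurableEquiv.toLp 2 (Fin 3 → ℝ)).symm.measurableEmbedding
  have hnorm : ∀ p : EuclideanSpace ℝ (Fin 3), ‖p‖ ^ 2 = ∑ j, (p j) ^ 2 := by
    intro p
    rw [EuclideanSpace.norm_eq, Real.sq_sqrt (Finset.sum_nonneg fun j _ => by positivity)]
    simp [sq_abs]
  have hfun0 : (fun p : EuclideanSpace ℝ (Fin 3) =>
      Real.exp (-Real.sqrt (m ^ 2 + ‖p‖ ^ 2) / θ))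
      = (fun q : Fin 3 → ℝ => Real.exp (-Real.sqrt (m ^ 2 + ∑ j, (q j) ^ 2) / θ))
        ∘ (MeasurableEquiv.toLp 2 (Fin 3 → ℝ)).symm := by
    funext p
    simp only [Function.comp_apply]
    rw [hnorm p]
    rfl
  have hfun1 : ∀ i : Fin 3, (fun p : EuclideanSpace ℝ (Fin 3) =>
      (p i) ^ 2 / Real.sqrt (m ^ 2 + ‖p‖ ^ 2) * Real.exp (-Real.sqrt (m ^ 2 + ‖p‖ ^ 2) / θ))
      = (fun q : Fin 3 → ℝ => (q i) ^ 2 / Real.sqrt (m ^ 2 + ∑ j, (q j) ^ 2) *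
          Real.exp (-Real.sqrt (m ^ 2 + ∑ j, (q j) ^ 2) / θ))
        ∘ (MeasurableEquiv.toLp 2 (Fin 3 → ℝ)).symm := by
    intro i
    funext p
    simp only [Function.comp_apply]
    rw [hnorm p]
    rfl
  refine ⟨?_, fun i => ?_, fun i => ?_⟩
  · rw [hfun0]
    exact (mpE.integrable_comp_emb emb).mpr hA
  · rw [hfun1 i]
    exact (mpE.integrable_comp_emb emb).mpr (hB i)
  · calc (∫ p : EuclideanSpace ℝ (Fin 3),
          (p i) ^ 2 / Real.sqrt (m ^ 2 + ‖p‖ ^ 2) * Real.exp (-Real.sqrt (m ^ 2 + ‖p‖ ^ 2) / θ))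
        = ∫ p : Fin 3 → ℝ, (p i) ^ 2 / Real.sqrt (m ^ 2 + ∑ j, (p j) ^ 2) *
            Real.exp (-Real.sqrt (m ^ 2 + ∑ j, (p j) ^ 2) / θ) := by
          rw [show (fun p : EuclideanSpace ℝ (Fin 3) => (p i) ^ 2 / Real.sqrt (m ^ 2 + ‖p‖ ^ 2) *
              Real.exp (-Real.sqrt (m ^ 2 + ‖p‖ ^ 2) / θ)) = _ from hfun1 i]
          exact mpE.integral_comp emb (G := ℝ) (fun q : Fin 3 → ℝ => (q i) ^ 2 / Real.sqrt (m ^ 2 + ∑ j, (q j) ^ 2) *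
              Real.exp (-Real.sqrt (m ^ 2 + ∑ j, (q j) ^ 2) / θ))
      _ = θ * ∫ p : Fin 3 → ℝ, Real.exp (-Real.sqrt (m ^ 2 + ∑ j, (p j) ^ 2) / θ) := hC i
      _ = θ * ∫ p : EuclideanSpace ℝ (Fin 3), Real.exp (-Real.sqrt (m ^ 2 + ‖p‖ ^ 2) / θ) := by
          congr 1
          rw [show (fun p : EuclideanSpace ℝ (Fin 3) =>
              Real.exp (-Real.sqrt (m ^ 2 + ‖p‖ ^ 2) / θ)) = _ from hfun0]
          exact (mpE.integral_comp emb (G := ℝ) _).symm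
end

section
/- For every α ∈ (0,1) and every c > 0 there exists a constant C = C(α, c) > 0 such that for all p¹, p² ∈ ℝ³: ∫_{ℝ³} e^{−c√(1+|q|²)} (1 + |p¹ − q|^{−(1+α)}) (1 + |p² − q|^{−1}) dq ≤ C. -/
open MeasureTheory Metric
open scoped ENNReal

namespace DoubleRieszAux

local notation "E3" => EuclideanSpace ℝ (Fin 3)

lemma finrank_E3 : Module.finrank ℝ E3 = 3 := by
  simp [finrank_euclideanSpace]

/-- Measurability of a real rpow with positive exponent of a nonnegative continuous base. -/
lemma measurable_dist_rpow (p : E3) {s : ℝ} (hs : 0 < s) :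
    Measurable fun q : E3 => dist p q ^ (-s) := by
  have hfun : (fun q : E3 => dist p q ^ (-s))
      = fun q : E3 => if dist p q = 0 then 0 else Real.exp (Real.log (dist p q) * (-s)) := by
    funext q
    by_cases h : dist p q = 0
    · simp [h, Real.zero_rpow (by linarith : -s ≠ 0)]
    · rw [if_neg h, Real.rpow_def_of_pos (lt_of_le_of_ne dist_nonneg (Ne.symm h))]
  rw [hfun]
  have hd : Measurable fun q : E3 => dist p q := (continuous_const.dist continuous_id).measurable
  exact Measurable.ite (hd (measurableSet_singleton 0)) measurable_const
    ((Real.measurable_log.comp hd).mul_const (-s)).exp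

lemma measurable_weight (c : ℝ) :
    Measurable fun q : E3 => Real.exp (-c * Real.sqrt (1 + ‖q‖ ^ 2)) := by
  fun_prop

/-- Finiteness of the integral of `‖x‖^{-s}` over the unit ball in dimension 3, for `s < 3`. -/
lemma ball_rpow_finite {s : ℝ} (hs0 : 0 < s) (hs3 : s < 3) :
    (∫⁻ x : E3 in Metric.ball 0 1, ENNReal.ofReal (‖x‖ ^ (-s))) < ⊤ := by
  classical
  set A : ℕ → Set E3 :=
    fun n => Metric.ball 0 ((1 / 2 : ℝ) ^ n) \ Metric.ball 0 ((1 / 2 : ℝ) ^ (n + 1)) with hA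
  -- the union of the dyadic annuli (plus the origin) covers the ball
  have hcover : Metric.ball (0 : E3) 1 ⊆ {0} ∪ ⋃ n, A n := by
    intro x hx
    rcases eq_or_ne x 0 with h | h
    · exact Or.inl (by simp [h])
    · have hx0 : 0 < ‖x‖ := norm_pos_iff.2 h
      have hex : ∃ n : ℕ, (1 / 2 : ℝ) ^ (n + 1) ≤ ‖x‖ := by
        obtain ⟨n, hn⟩ := exists_pow_lt_of_lt_one hx0 (by norm_num : (1 / 2 : ℝ) < 1)
        refine ⟨n, le_trans ?_ hn.le⟩
        exact pow_le_pow_of_le_one (by norm_num) (by norm_num) (Nat.le_succ n)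
      set n₀ := Nat.find hex with hn₀
      have h1 : (1 / 2 : ℝ) ^ (n₀ + 1) ≤ ‖x‖ := Nat.find_spec hex
      have h2 : ‖x‖ < (1 / 2 : ℝ) ^ n₀ := by
        rcases Nat.eq_zero_or_pos n₀ with h0 | hpos
        · rw [h0, pow_zero]
          exact mem_ball_zero_iff.mp hx
        · obtain ⟨m, hm⟩ := Nat.exists_eq_succ_of_ne_zero hpos.ne'
          have := Nat.find_min hex (m := m) (by omega)
          rw [hm]
          exact lt_of_not_ge this
      refine Or.inr (Set.mem_iUnion.2 ⟨n₀, ?_⟩)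
      simp only [hA, Set.mem_diff, mem_ball_zero_iff]
      exact ⟨h2, not_lt.2 h1⟩
  set b : ℝ := (2 : ℝ) ^ s with hb
  have hb0 : 0 < b := Real.rpow_pos_of_pos (by norm_num) _
  have hb8 : b < 8 := by
    have : (2 : ℝ) ^ s < (2 : ℝ) ^ (3 : ℝ) :=
      Real.rpow_lt_rpow_of_exponent_lt (by norm_num) hs3
    calc b < (2 : ℝ) ^ (3 : ℝ) := this
    _ = 8 := by
        rw [show (3 : ℝ) = ((3 : ℕ) : ℝ) by norm_num, Real.rpow_natCast]; norm_num
  set V : ℝ≥0∞ := volume (Metric.ball (0 : E3) 1) with hV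
  have hVfin : V < ⊤ := measure_ball_lt_top
  -- bound on each annulus
  have key : ∀ n : ℕ, (∫⁻ x : E3 in A n, ENNReal.ofReal (‖x‖ ^ (-s)))
      ≤ ENNReal.ofReal (b * (b / 8) ^ n) * V := by
    intro n
    have hrpos : (0 : ℝ) < (1 / 2 : ℝ) ^ (n + 1) := by positivity
    have hbound : ∀ x ∈ A n, ENNReal.ofReal (‖x‖ ^ (-s))
        ≤ ENNReal.ofReal (((1 / 2 : ℝ) ^ (n + 1)) ^ (-s)) := by
      intro x hxA
      have hxlb : (1 / 2 : ℝ) ^ (n + 1) ≤ ‖x‖ := by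
        have := hxA.2
        simpa [mem_ball_zero_iff, not_lt] using this
      apply ENNReal.ofReal_le_ofReal
      exact Real.antitoneOn_rpow_Ioi_of_exponent_nonpos (by linarith)
        (Set.mem_Ioi.2 hrpos) (Set.mem_Ioi.2 (lt_of_lt_of_le hrpos hxlb)) hxlb
    calc (∫⁻ x : E3 in A n, ENNReal.ofReal (‖x‖ ^ (-s)))
        ≤ ∫⁻ _ : E3 in A n, ENNReal.ofReal (((1 / 2 : ℝ) ^ (n + 1)) ^ (-s)) := by
          apply setLIntegral_mono' (by
            apply MeasurableSet.diff <;> exact measurableSet_ball) hbound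
      _ = ENNReal.ofReal (((1 / 2 : ℝ) ^ (n + 1)) ^ (-s)) * volume (A n) := by
          rw [setLIntegral_const]
      _ ≤ ENNReal.ofReal (((1 / 2 : ℝ) ^ (n + 1)) ^ (-s))
            * volume (Metric.ball (0 : E3) ((1 / 2 : ℝ) ^ n)) := by
          gcongr
          exact Set.diff_subset
      _ = ENNReal.ofReal (b * (b / 8) ^ n) * V := by
          rw [Measure.addHaar_ball (volume : Measure E3) 0 (by positivity :
            (0 : ℝ) ≤ (1 / 2 : ℝ) ^ n), finrank_E3, ← mul_assoc, ← ENNReal.ofReal_mul (by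
              positivity)]
          congr 2
          have h12 : ((1 / 2 : ℝ) ^ (n + 1)) ^ (-s) = ((1 / 2 : ℝ) ^ (-s)) ^ (n + 1) := by
            rw [← Real.rpow_natCast ((1 / 2 : ℝ)) (n + 1),
              ← Real.rpow_natCast ((1 / 2 : ℝ) ^ (-s)) (n + 1),
              ← Real.rpow_mul (by norm_num), ← Real.rpow_mul (by norm_num), mul_comm]
          have hhalf : (1 / 2 : ℝ) ^ (-s) = b := by
            rw [hb, one_div, Real.inv_rpow (by norm_num : (0:ℝ) ≤ 2), Real.rpow_neg
              (by norm_num : (0:ℝ) ≤ 2), inv_inv]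
          rw [h12, hhalf]
          have : ((1 / 2 : ℝ) ^ n) ^ (3 : ℕ) = (1 / 8 : ℝ) ^ n := by
            rw [← pow_mul, mul_comm n 3, pow_mul]; norm_num
          rw [this, pow_succ, div_pow, div_pow]
          ring
  -- sum the geometric series
  have hsum : (∑' n : ℕ, ENNReal.ofReal (b * (b / 8) ^ n) * V) < ⊤ := by
    have heq : ∀ n : ℕ, ENNReal.ofReal (b * (b / 8) ^ n) * V
        = (ENNReal.ofReal b * V) * (ENNReal.ofReal (b / 8)) ^ n := by
      intro n
      rw [ENNReal.ofReal_mul hb0.le, ENNReal.ofReal_pow (by positivity)]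
      ring
    rw [tsum_congr heq, ENNReal.tsum_mul_left, ENNReal.tsum_geometric]
    apply ENNReal.mul_lt_top (ENNReal.mul_lt_top ENNReal.ofReal_lt_top hVfin)
    rw [ENNReal.inv_lt_top]
    have : ENNReal.ofReal (b / 8) < 1 := by
      rw [ENNReal.ofReal_lt_one]
      linarith [hb8]
    simpa [tsub_pos_iff_lt] using this
  calc (∫⁻ x : E3 in Metric.ball 0 1, ENNReal.ofReal (‖x‖ ^ (-s)))
      ≤ ∫⁻ x : E3 in {0} ∪ ⋃ n, A n, ENNReal.ofReal (‖x‖ ^ (-s)) :=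
        lintegral_mono_set hcover
    _ ≤ (∫⁻ x : E3 in ({0} : Set E3), ENNReal.ofReal (‖x‖ ^ (-s)))
          + ∫⁻ x : E3 in ⋃ n, A n, ENNReal.ofReal (‖x‖ ^ (-s)) :=
        lintegral_union_le _ _ _
    _ ≤ 0 + ∑' n : ℕ, ∫⁻ x : E3 in A n, ENNReal.ofReal (‖x‖ ^ (-s)) := by
        gcongr
        · rw [setLIntegral_measure_zero _ _ (measure_singleton (0 : E3))]
        · exact lintegral_iUnion_le _ _
    _ ≤ 0 + ∑' n : ℕ, ENNReal.ofReal (b * (b / 8) ^ n) * V := by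
        gcongr with n
        exact key n
    _ < ⊤ := by simpa using hsum

/-- Finiteness of the exponential weight integral. -/
lemma exp_weight_finite {c : ℝ} (hc : 0 < c) :
    (∫⁻ q : E3, ENNReal.ofReal (Real.exp (-c * Real.sqrt (1 + ‖q‖ ^ 2)))) < ⊤ := by
  set t : ℝ := min c 4 / 4 with ht
  have ht0 : 0 < t := by positivity
  have ht1 : t ≤ 1 := by
    rw [ht, div_le_one (by norm_num)]
    exact le_trans (min_le_right _ _) (by norm_num)
  have h4t : 4 * t ≤ c := by
    rw [ht]
    have : 4 * (min c 4 / 4) = min c 4 := by ring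
    rw [this]
    exact min_le_left _ _
  have hpt : ∀ q : E3, Real.exp (-c * Real.sqrt (1 + ‖q‖ ^ 2))
      ≤ t⁻¹ ^ 4 * (1 + ‖q‖) ^ (-(4 : ℝ)) := by
    intro q
    set r : ℝ := ‖q‖ with hr
    have hr0 : 0 ≤ r := norm_nonneg _
    have hsqrt : r ≤ Real.sqrt (1 + r ^ 2) := by
      nlinarith [Real.sq_sqrt (show (0:ℝ) ≤ 1 + r ^ 2 by positivity),
        Real.sqrt_nonneg (1 + r ^ 2)]
    have h1 : Real.exp (-c * Real.sqrt (1 + r ^ 2)) ≤ Real.exp (-c * r) := by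
      apply Real.exp_le_exp.2
      nlinarith
    have h2 : 1 + r ≤ t⁻¹ * Real.exp (t * r) := by
      have : t * (1 + r) ≤ Real.exp (t * r) := by
        have := Real.add_one_le_exp (t * r)
        nlinarith
      calc 1 + r = t⁻¹ * (t * (1 + r)) := by field_simp
        _ ≤ t⁻¹ * Real.exp (t * r) := by
            apply mul_le_mul_of_nonneg_left this (by positivity)
    have h3 : (1 + r) ^ (4 : ℕ) ≤ t⁻¹ ^ 4 * Real.exp (c * r) := by
      calc (1 + r) ^ (4 : ℕ) ≤ (t⁻¹ * Real.exp (t * r)) ^ (4 : ℕ) := by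
            apply pow_le_pow_left₀ (by linarith) h2
        _ = t⁻¹ ^ 4 * Real.exp (4 * (t * r)) := by
            rw [mul_pow, ← Real.exp_nat_mul]; norm_num
        _ ≤ t⁻¹ ^ 4 * Real.exp (c * r) := by
            apply mul_le_mul_of_nonneg_left _ (by positivity)
            apply Real.exp_le_exp.2
            nlinarith
    have hpow : (1 + r) ^ (-(4 : ℝ)) = ((1 + r) ^ (4 : ℕ))⁻¹ := by
      rw [← Real.rpow_natCast (1 + r) 4, ← Real.rpow_neg (by linarith)]
      norm_num
    rw [hpow]
    have hq4 : (0 : ℝ) < (1 + r) ^ (4 : ℕ) := by positivity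
    rw [← div_eq_mul_inv, le_div_iff₀ hq4]
    calc Real.exp (-c * Real.sqrt (1 + r ^ 2)) * (1 + r) ^ (4 : ℕ)
        ≤ Real.exp (-c * r) * (1 + r) ^ (4 : ℕ) := by
          apply mul_le_mul_of_nonneg_right h1 (by positivity)
      _ ≤ Real.exp (-c * r) * (t⁻¹ ^ 4 * Real.exp (c * r)) := by
          apply mul_le_mul_of_nonneg_left h3 (Real.exp_nonneg _)
      _ = t⁻¹ ^ 4 := by
          rw [← mul_assoc, mul_comm (Real.exp (-c * r)), mul_assoc, ← Real.exp_add]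
          simp
  calc (∫⁻ q : E3, ENNReal.ofReal (Real.exp (-c * Real.sqrt (1 + ‖q‖ ^ 2))))
      ≤ ∫⁻ q : E3, ENNReal.ofReal (t⁻¹ ^ 4 * (1 + ‖q‖) ^ (-(4 : ℝ))) :=
        lintegral_mono fun q => ENNReal.ofReal_le_ofReal (hpt q)
    _ = ENNReal.ofReal (t⁻¹ ^ 4) * ∫⁻ q : E3, ENNReal.ofReal ((1 + ‖q‖) ^ (-(4 : ℝ))) := by
        rw [← lintegral_const_mul' _ _ ENNReal.ofReal_ne_top]
        congr 1
        funext q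
        rw [← ENNReal.ofReal_mul (by positivity)]
    _ < ⊤ := by
        apply ENNReal.mul_lt_top ENNReal.ofReal_lt_top
        apply finite_integral_one_add_norm
        rw [finrank_E3]
        norm_num

/-- Uniform bound for a single singularity against the exponential weight. -/
lemma single_bound {c s : ℝ} (hc : 0 ≤ c) (hs0 : 0 < s) (p : E3) :
    (∫⁻ q : E3, ENNReal.ofReal (Real.exp (-c * Real.sqrt (1 + ‖q‖ ^ 2)) * dist p q ^ (-s)))
      ≤ (∫⁻ x : E3 in Metric.ball 0 1, ENNReal.ofReal (‖x‖ ^ (-s)))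
        + ∫⁻ q : E3, ENNReal.ofReal (Real.exp (-c * Real.sqrt (1 + ‖q‖ ^ 2))) := by
  set g : E3 → ℝ≥0∞ :=
    (Metric.ball p 1).indicator (fun q => ENNReal.ofReal (dist p q ^ (-s))) with hg
  have hgmeas : Measurable g :=
    (ENNReal.measurable_ofReal.comp (measurable_dist_rpow p hs0)).indicator measurableSet_ball
  have hpt : ∀ q : E3, ENNReal.ofReal (Real.exp (-c * Real.sqrt (1 + ‖q‖ ^ 2)) * dist p q ^ (-s))
      ≤ g q + ENNReal.ofReal (Real.exp (-c * Real.sqrt (1 + ‖q‖ ^ 2))) := by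
    intro q
    by_cases hq : q ∈ Metric.ball p 1
    · have : g q = ENNReal.ofReal (dist p q ^ (-s)) := Set.indicator_of_mem hq _
      rw [this]
      refine le_trans ?_ le_self_add
      apply ENNReal.ofReal_le_ofReal
      calc Real.exp (-c * Real.sqrt (1 + ‖q‖ ^ 2)) * dist p q ^ (-s)
          ≤ 1 * dist p q ^ (-s) := by
            apply mul_le_mul_of_nonneg_right _ (Real.rpow_nonneg dist_nonneg _)
            apply Real.exp_le_one_iff.2
            have h1 : (0:ℝ) ≤ Real.sqrt (1 + ‖q‖ ^ 2) := Real.sqrt_nonneg _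
            nlinarith
        _ = dist p q ^ (-s) := one_mul _
    · refine le_trans ?_ le_add_self
      apply ENNReal.ofReal_le_ofReal
      have hd : 1 ≤ dist p q := by
        rw [dist_comm]
        exact not_lt.1 (by simpa [Metric.mem_ball] using hq)
      calc Real.exp (-c * Real.sqrt (1 + ‖q‖ ^ 2)) * dist p q ^ (-s)
          ≤ Real.exp (-c * Real.sqrt (1 + ‖q‖ ^ 2)) * 1 := by
            apply mul_le_mul_of_nonneg_left _ (Real.exp_nonneg _)
            exact Real.rpow_le_one_of_one_le_of_nonpos hd (by linarith)
        _ = Real.exp (-c * Real.sqrt (1 + ‖q‖ ^ 2)) := mul_one _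
  calc (∫⁻ q : E3, ENNReal.ofReal (Real.exp (-c * Real.sqrt (1 + ‖q‖ ^ 2)) * dist p q ^ (-s)))
      ≤ ∫⁻ q : E3, (g q + ENNReal.ofReal (Real.exp (-c * Real.sqrt (1 + ‖q‖ ^ 2)))) :=
        lintegral_mono hpt
    _ = (∫⁻ q : E3, g q) + ∫⁻ q : E3, ENNReal.ofReal (Real.exp (-c * Real.sqrt (1 + ‖q‖ ^ 2))) :=
        lintegral_add_left hgmeas _
    _ = (∫⁻ x : E3 in Metric.ball 0 1, ENNReal.ofReal (‖x‖ ^ (-s)))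
        + ∫⁻ q : E3, ENNReal.ofReal (Real.exp (-c * Real.sqrt (1 + ‖q‖ ^ 2))) := by
        congr 1
        -- translation invariance
        have hG : ∀ q : E3, g q
            = (Metric.ball (0 : E3) 1).indicator
                (fun x => ENNReal.ofReal (‖x‖ ^ (-s))) (q - p) := by
          intro q
          have hmem : q ∈ Metric.ball p 1 ↔ q - p ∈ Metric.ball (0 : E3) 1 := by
            rw [mem_ball_zero_iff, Metric.mem_ball, dist_eq_norm]
          have hdist : dist p q = ‖q - p‖ := by rw [dist_comm, dist_eq_norm]
          by_cases hq : q ∈ Metric.ball p 1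
          · rw [hg]
            rw [Set.indicator_of_mem hq, Set.indicator_of_mem (hmem.1 hq), hdist]
          · rw [hg]
            rw [Set.indicator_of_notMem hq, Set.indicator_of_notMem (fun h => hq (hmem.2 h))]
        calc (∫⁻ q : E3, g q)
            = ∫⁻ q : E3, (Metric.ball (0 : E3) 1).indicator
                (fun x => ENNReal.ofReal (‖x‖ ^ (-s))) (q - p) := by
              exact lintegral_congr hG
          _ = ∫⁻ q : E3, (Metric.ball (0 : E3) 1).indicator
                (fun x => ENNReal.ofReal (‖x‖ ^ (-s))) q :=
              lintegral_sub_right_eq_self _ p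
          _ = ∫⁻ x : E3 in Metric.ball 0 1, ENNReal.ofReal (‖x‖ ^ (-s)) :=
              lintegral_indicator measurableSet_ball _

end DoubleRieszAux

open DoubleRieszAux in
/-- For `α ∈ (0,1)` and `c > 0`, the integral of the product of two Riesz-type singularities
of orders `1 + α` and `1` against the weight `e^{-c√(1+|q|²)}` is bounded uniformly in the
two singular points. -/
theorem double_riesz_singularity_bound (α c : ℝ) (hα0 : 0 < α) (hα1 : α < 1) (hc : 0 < c) :
    ∃ C : ℝ, 0 < C ∧ ∀ p₁ p₂ : EuclideanSpace ℝ (Fin 3),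
      (∫⁻ q, ENNReal.ofReal
          (Real.exp (-c * Real.sqrt (1 + ‖q‖ ^ 2))
            * (1 + dist p₁ q ^ (-(1 + α))) * (1 + (dist p₂ q)⁻¹)))
        ≤ ENNReal.ofReal C := by
  classical
  have h1 : (0 : ℝ) < 1 + α := by linarith
  have h2 : (0 : ℝ) < 2 + α := by linarith
  have I₁fin := ball_rpow_finite (s := 1 + α) h1 (by linarith)
  have I₂fin := ball_rpow_finite (s := 1) one_pos (by norm_num)
  have I₃fin := ball_rpow_finite (s := 2 + α) h2 (by linarith)
  have Efin := exp_weight_finite hc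
  set Ib : ℝ → ℝ≥0∞ := fun s =>
    ∫⁻ x : EuclideanSpace ℝ (Fin 3) in Metric.ball 0 1, ENNReal.ofReal (‖x‖ ^ (-s)) with hIb
  set Ew : ℝ≥0∞ := ∫⁻ q : EuclideanSpace ℝ (Fin 3),
    ENNReal.ofReal (Real.exp (-c * Real.sqrt (1 + ‖q‖ ^ 2))) with hEw
  set K : ℝ≥0∞ :=
    Ew + (Ib (1 + α) + Ew) + (Ib 1 + Ew) + (Ib (2 + α) + Ew) + (Ib (2 + α) + Ew) with hK
  have hKfin : K ≠ ⊤ := by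
    rw [hK]
    simp only [ne_eq, ENNReal.add_eq_top, not_or]
    exact ⟨⟨⟨⟨Efin.ne, I₁fin.ne, Efin.ne⟩, I₂fin.ne, Efin.ne⟩, I₃fin.ne, Efin.ne⟩,
      I₃fin.ne, Efin.ne⟩
  refine ⟨K.toReal + 1, by positivity, fun p₁ p₂ => ?_⟩
  have hpt : ∀ q : EuclideanSpace ℝ (Fin 3),
      ENNReal.ofReal (Real.exp (-c * Real.sqrt (1 + ‖q‖ ^ 2))
        * (1 + dist p₁ q ^ (-(1 + α))) * (1 + (dist p₂ q)⁻¹))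
      ≤ ENNReal.ofReal (Real.exp (-c * Real.sqrt (1 + ‖q‖ ^ 2)))
        + ENNReal.ofReal (Real.exp (-c * Real.sqrt (1 + ‖q‖ ^ 2)) * dist p₁ q ^ (-(1 + α)))
        + ENNReal.ofReal (Real.exp (-c * Real.sqrt (1 + ‖q‖ ^ 2)) * dist p₂ q ^ (-(1 : ℝ)))
        + ENNReal.ofReal (Real.exp (-c * Real.sqrt (1 + ‖q‖ ^ 2)) * dist p₁ q ^ (-(2 + α)))
        + ENNReal.ofReal (Real.exp (-c * Real.sqrt (1 + ‖q‖ ^ 2)) * dist p₂ q ^ (-(2 + α))) := by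
    intro q
    set P : ℝ := Real.exp (-c * Real.sqrt (1 + ‖q‖ ^ 2)) with hP
    have hP0 : 0 ≤ P := Real.exp_nonneg _
    set d₁ : ℝ := dist p₁ q with hd₁
    set d₂ : ℝ := dist p₂ q with hd₂
    have hd₁0 : 0 ≤ d₁ := dist_nonneg
    have hd₂0 : 0 ≤ d₂ := dist_nonneg
    have hcross : d₁ ^ (-(1 + α)) * d₂⁻¹ ≤ d₁ ^ (-(2 + α)) + d₂ ^ (-(2 + α)) := by
      rcases le_total d₁ d₂ with hle | hle
      · rcases eq_or_lt_of_le hd₁0 with h0 | h0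
        · rw [← h0, Real.zero_rpow (by linarith : -(1 + α) ≠ 0), zero_mul]
          positivity
        · have hd₂p : 0 < d₂ := lt_of_lt_of_le h0 hle
          have hbb : d₂⁻¹ ≤ d₁⁻¹ := by
            apply inv_anti₀ h0 hle
          calc d₁ ^ (-(1 + α)) * d₂⁻¹ ≤ d₁ ^ (-(1 + α)) * d₁⁻¹ :=
                mul_le_mul_of_nonneg_left hbb (Real.rpow_nonneg hd₁0 _)
            _ = d₁ ^ (-(2 + α)) := by
                rw [← Real.rpow_neg_one d₁, ← Real.rpow_add h0]
                congr 1; ring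
            _ ≤ d₁ ^ (-(2 + α)) + d₂ ^ (-(2 + α)) :=
                le_add_of_nonneg_right (Real.rpow_nonneg hd₂0 _)
      · rcases eq_or_lt_of_le hd₂0 with h0 | h0
        · rw [← h0]
          simp
          positivity
        · have hd₁p : 0 < d₁ := lt_of_lt_of_le h0 hle
          have haa : d₁ ^ (-(1 + α)) ≤ d₂ ^ (-(1 + α)) :=
            Real.antitoneOn_rpow_Ioi_of_exponent_nonpos (by linarith)
              (Set.mem_Ioi.2 h0) (Set.mem_Ioi.2 hd₁p) hle
          calc d₁ ^ (-(1 + α)) * d₂⁻¹ ≤ d₂ ^ (-(1 + α)) * d₂⁻¹ :=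
                mul_le_mul_of_nonneg_right haa (inv_nonneg.2 hd₂0)
            _ = d₂ ^ (-(2 + α)) := by
                rw [← Real.rpow_neg_one d₂, ← Real.rpow_add h0]
                congr 1; ring
            _ ≤ d₁ ^ (-(2 + α)) + d₂ ^ (-(2 + α)) :=
                le_add_of_nonneg_left (Real.rpow_nonneg hd₁0 _)
    have hreal : P * (1 + d₁ ^ (-(1 + α))) * (1 + d₂⁻¹)
        ≤ P + P * d₁ ^ (-(1 + α)) + P * d₂ ^ (-(1 : ℝ)) + P * d₁ ^ (-(2 + α))
          + P * d₂ ^ (-(2 + α)) := by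
      have hbb : d₂ ^ (-(1 : ℝ)) = d₂⁻¹ := Real.rpow_neg_one d₂
      rw [hbb]
      have hexp : P * (1 + d₁ ^ (-(1 + α))) * (1 + d₂⁻¹)
          = P + P * d₁ ^ (-(1 + α)) + P * d₂⁻¹ + P * (d₁ ^ (-(1 + α)) * d₂⁻¹) := by ring
      have h5 : P * (d₁ ^ (-(1 + α)) * d₂⁻¹)
          ≤ P * d₁ ^ (-(2 + α)) + P * d₂ ^ (-(2 + α)) := by
        calc P * (d₁ ^ (-(1 + α)) * d₂⁻¹)
            ≤ P * (d₁ ^ (-(2 + α)) + d₂ ^ (-(2 + α))) :=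
              mul_le_mul_of_nonneg_left hcross hP0
          _ = P * d₁ ^ (-(2 + α)) + P * d₂ ^ (-(2 + α)) := mul_add _ _ _
      linarith [hexp, h5]
    calc ENNReal.ofReal (P * (1 + d₁ ^ (-(1 + α))) * (1 + d₂⁻¹))
        ≤ ENNReal.ofReal (P + P * d₁ ^ (-(1 + α)) + P * d₂ ^ (-(1 : ℝ))
            + P * d₁ ^ (-(2 + α)) + P * d₂ ^ (-(2 + α))) :=
          ENNReal.ofReal_le_ofReal hreal
      _ = _ := by
          rw [ENNReal.ofReal_add (by positivity) (by positivity),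
            ENNReal.ofReal_add (by positivity) (by positivity),
            ENNReal.ofReal_add (by positivity) (by positivity),
            ENNReal.ofReal_add (by positivity) (by positivity)]
  have m₁ : Measurable fun q : EuclideanSpace ℝ (Fin 3) =>
      ENNReal.ofReal (Real.exp (-c * Real.sqrt (1 + ‖q‖ ^ 2))) :=
    (measurable_weight c).ennreal_ofReal
  have msing : ∀ (p : EuclideanSpace ℝ (Fin 3)) {s : ℝ}, 0 < s →
      Measurable fun q : EuclideanSpace ℝ (Fin 3) =>
        ENNReal.ofReal (Real.exp (-c * Real.sqrt (1 + ‖q‖ ^ 2)) * dist p q ^ (-s)) :=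
    fun p s hs => ((measurable_weight c).mul (measurable_dist_rpow p hs)).ennreal_ofReal
  have m₂ := msing p₁ h1
  have m₃ := msing p₂ one_pos
  have m₄ := msing p₁ h2
  have m₅ := msing p₂ h2
  calc (∫⁻ q, ENNReal.ofReal
          (Real.exp (-c * Real.sqrt (1 + ‖q‖ ^ 2))
            * (1 + dist p₁ q ^ (-(1 + α))) * (1 + (dist p₂ q)⁻¹)))
      ≤ ∫⁻ q : EuclideanSpace ℝ (Fin 3),
          (ENNReal.ofReal (Real.exp (-c * Real.sqrt (1 + ‖q‖ ^ 2)))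
          + ENNReal.ofReal (Real.exp (-c * Real.sqrt (1 + ‖q‖ ^ 2)) * dist p₁ q ^ (-(1 + α)))
          + ENNReal.ofReal (Real.exp (-c * Real.sqrt (1 + ‖q‖ ^ 2)) * dist p₂ q ^ (-(1 : ℝ)))
          + ENNReal.ofReal (Real.exp (-c * Real.sqrt (1 + ‖q‖ ^ 2)) * dist p₁ q ^ (-(2 + α)))
          + ENNReal.ofReal (Real.exp (-c * Real.sqrt (1 + ‖q‖ ^ 2)) * dist p₂ q ^ (-(2 + α)))) :=
        lintegral_mono hpt
    _ = (∫⁻ q : EuclideanSpace ℝ (Fin 3),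
            ENNReal.ofReal (Real.exp (-c * Real.sqrt (1 + ‖q‖ ^ 2))))
        + (∫⁻ q : EuclideanSpace ℝ (Fin 3),
            ENNReal.ofReal (Real.exp (-c * Real.sqrt (1 + ‖q‖ ^ 2)) * dist p₁ q ^ (-(1 + α))))
        + (∫⁻ q : EuclideanSpace ℝ (Fin 3),
            ENNReal.ofReal (Real.exp (-c * Real.sqrt (1 + ‖q‖ ^ 2)) * dist p₂ q ^ (-(1 : ℝ))))
        + (∫⁻ q : EuclideanSpace ℝ (Fin 3),
            ENNReal.ofReal (Real.exp (-c * Real.sqrt (1 + ‖q‖ ^ 2)) * dist p₁ q ^ (-(2 + α))))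
        + (∫⁻ q : EuclideanSpace ℝ (Fin 3),
            ENNReal.ofReal (Real.exp (-c * Real.sqrt (1 + ‖q‖ ^ 2)) * dist p₂ q ^ (-(2 + α)))) := by
        rw [lintegral_add_left (f := fun q => _ + _ + _ + _) (((m₁.add m₂).add m₃).add m₄),
          lintegral_add_left (f := fun q => _ + _ + _) ((m₁.add m₂).add m₃),
          lintegral_add_left (f := fun q => _ + _) (m₁.add m₂), lintegral_add_left m₁]
    _ ≤ Ew + (Ib (1 + α) + Ew) + (Ib 1 + Ew) + (Ib (2 + α) + Ew) + (Ib (2 + α) + Ew) := by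
        gcongr ?_ + ?_ + ?_ + ?_ + ?_
        · exact le_rfl
        · exact single_bound hc.le h1 p₁
        · exact single_bound hc.le one_pos p₂
        · exact single_bound hc.le h2 p₁
        · exact single_bound hc.le h2 p₂
    _ = K := by rw [hK]
    _ ≤ ENNReal.ofReal (K.toReal + 1) := by
        rw [← ENNReal.ofReal_toReal hKfin]
        exact ENNReal.ofReal_le_ofReal (by
          rw [ENNReal.toReal_ofReal ENNReal.toReal_nonneg]
          linarith)
end
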